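/- arXiv:2411.19164 — 5 statements merged into one kernel-verified Lean document; each statement's English description precedes it below -/
import Mathlib

section
/- Let p be a prime, d ∈ ℕ, τ ∈ (0,1), α > 1/2, and let γ = (γ_u) be weights with 0 < γ_u ≤ 1 for every nonempty u ⊆ {1,…,d}. Then there exists a subset Z ⊆ {1,…,p−1}^d with |Z| ≥ ⌈τ (p−1)^d⌉ such that for every z ∈ Z, E(p,z) ≤ inf_{1/2 ≤ λ < α} ( (2/((1−τ)(p−1))) · V_d(α/λ, γ^{1/λ}) )^λ. -/
open scoped BigOperators Classical ENNReal

noncomputable section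

/-- Real Riemann zeta value `ζ(β) = Σ_{k≥1} k^{-β}` (for `β > 1`). -/
def zetaR (β : ℝ) : ℝ := ∑' k : ℕ, ((k + 1 : ℝ)) ^ (-β)

/-- Support of a frequency vector. -/
def suppF {d : ℕ} (h : Fin d → ℤ) : Finset (Fin d) := Finset.univ.filter (fun j => h j ≠ 0)

/-- The Korobov weight function `r_{d,α,γ}`. -/
def rKor (d : ℕ) (α : ℝ) (γ : Finset (Fin d) → ℝ) (h : Fin d → ℤ) : ℝ :=
  if h = 0 then 1 else (γ (suppF h))⁻¹ * ∏ j ∈ suppF h, |(h j : ℝ)| ^ α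

/-- `V_d(β, γ) = Σ_{∅ ≠ u ⊆ {1,…,d}} γ_u (2ζ(β))^{|u|}`. -/
def Vd (d : ℕ) (β : ℝ) (γ : Finset (Fin d) → ℝ) : ℝ :=
  ∑ u ∈ Finset.univ.filter (fun u : Finset (Fin d) => u.Nonempty), γ u * (2 * zetaR β) ^ u.card

/-- The set of generating vectors `{1,…,p-1}^d`. -/
def genSet (d p : ℕ) : Finset (Fin d → ℤ) :=
  Fintype.piFinset (fun _ => Finset.Icc (1 : ℤ) ((p : ℤ) - 1))

/-- Nonzero dual lattice points: `h ≠ 0` with `h·z ≡ 0 (mod p)`. -/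
def dualLat (d p : ℕ) (z : Fin d → ℤ) : Set (Fin d → ℤ) :=
  {h | h ≠ 0 ∧ (p : ℤ) ∣ ∑ j, h j * z j}

/-- Worst-case error of the lattice rule `Q_p^z` on the Korobov class. -/
def Edet (d : ℕ) (α : ℝ) (γ : Finset (Fin d) → ℝ) (p : ℕ) (z : Fin d → ℤ) : ℝ :=
  Real.sqrt (∑' h : dualLat d p z, ((rKor d α γ h.1) ^ 2)⁻¹)

/-- Quadrature error of the lattice rule `Q_p^z` on the function with
Fourier coefficients `a`. -/
def err (d p : ℕ) (z : Fin d → ℤ) (a : (Fin d → ℤ) → ℂ) : ℂ :=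
  ∑' h : dualLat d p z, a h.1

/-- The Korobov norm of the coefficient sequence `a`. -/
def korNorm (d : ℕ) (α : ℝ) (γ : Finset (Fin d) → ℝ) (a : (Fin d → ℤ) → ℂ) : ℝ :=
  Real.sqrt (∑' h : Fin d → ℤ, (rKor d α γ h) ^ 2 * ‖a h‖ ^ 2)

/-- Membership of the coefficient sequence in the Korobov class (`‖a‖ < ∞`). -/
def korSummable (d : ℕ) (α : ℝ) (γ : Finset (Fin d) → ℝ) (a : (Fin d → ℤ) → ℂ) : Prop :=
  Summable (fun h : Fin d → ℤ => (rKor d α γ h) ^ 2 * ‖a h‖ ^ 2)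

/-- The median (the `(N+1)/2`-th smallest value for odd `N`). -/
def medianR {N : ℕ} (f : Fin N → ℝ) : ℝ :=
  (List.insertionSort (· ≤ ·) (List.ofFn f)).getD ((N - 1) / 2) 0

/-- The median of complex numbers: medians of real and imaginary parts. -/
def medianC {N : ℕ} (f : Fin N → ℂ) : ℂ :=
  (medianR fun k => (f k).re) + (medianR fun k => (f k).im) * Complex.I

/-- The set `P_n` of primes `p` with `⌈n/2⌉ + 1 ≤ p ≤ n`. -/
def Pset (n : ℕ) : Finset ℕ := (Finset.Icc ((n + 1) / 2 + 1) n).filter Nat.Prime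

/-- The sample space of a single draw: pairs `(p, z)` with `p ∈ P_n`,
`z ∈ {1,…,p-1}^d`. -/
def allPairs (n d : ℕ) : Finset ((_ : ℕ) × (Fin d → ℤ)) :=
  (Pset n).sigma (fun p => genSet d p)

/-- The probability of one pair `(p,z)`: `p` uniform on `P_n`, and given `p`,
`z` uniform on `{1,…,p-1}^d`. -/
def pairWeight (n d : ℕ) (pz : (_ : ℕ) × (Fin d → ℤ)) : ℝ :=
  (((Pset n).card : ℝ))⁻¹ * (((pz.1 : ℝ) - 1) ^ d)⁻¹

/-- Number of repetitions used by the median algorithm `M_n`. -/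
def numReps (h : ℕ → ℝ) (n : ℕ) : ℕ := 2 * ⌈h n * Real.logb 2 n⌉₊ + 1

/-- Expectation, over the `N` independent draws of the median algorithm,
of a function `g` of the draws. -/
def expDraws (n d N : ℕ) (g : (Fin N → (_ : ℕ) × (Fin d → ℤ)) → ℝ) : ℝ :=
  ∑ ω ∈ Fintype.piFinset (fun _ : Fin N => allPairs n d),
    (∏ k, pairWeight n d (ω k)) * g ω

/-- Product weights `γ_u = ∏_{j ∈ u} γ_j`. -/
def prodW (d : ℕ) (γ : ℕ → ℝ) : Finset (Fin d) → ℝ := fun u => ∏ j ∈ u, γ (j : ℕ)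



lemma zsum {β : ℝ} (hβ : 1 < β) : Summable (fun k : ℕ => ((k + 1 : ℝ)) ^ (-β)) := by
  have := (Real.summable_nat_rpow (p := -β)).2 (by linarith)
  have h2 := (summable_nat_add_iff 1).2 this
  convert h2 using 2 with k
  · rfl
  push_cast
  ring_nf

lemma zetaR_nonneg (β : ℝ) : 0 ≤ zetaR β :=
  tsum_nonneg fun k => Real.rpow_nonneg (by positivity) _

lemma zetaR_pos {β : ℝ} (hβ : 1 < β) : 0 < zetaR β := by
  refine Summable.tsum_pos (zsum hβ) (fun k => Real.rpow_nonneg (by positivity) _) 0 ?_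
  positivity

def cE (β : ℝ) (k : ℤ) : ℝ≥0∞ := if k = 0 then 0 else ENNReal.ofReal (|(k : ℝ)| ^ (-β))

def c1 (k : ℤ) : ℝ≥0∞ := if k = 0 then 1 else 0

lemma tsum_c1 : ∑' k : ℤ, c1 k = 1 := by
  simpa [c1] using tsum_ite_eq (0 : ℤ) (1 : ℝ≥0∞)

lemma tsum_cE {β : ℝ} (hβ : 1 < β) : ∑' k : ℤ, cE β k = ENNReal.ofReal (2 * zetaR β) := by
  have hβ0 : -β ≠ 0 := by intro h; linarith [neg_eq_zero.mp h]
  have hsum : Summable (fun n : ℕ => ((n : ℝ)) ^ (-β)) :=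
    (Real.summable_nat_rpow (p := -β)).2 (by linarith)
  have hz : ∑' n : ℕ, ((n : ℝ)) ^ (-β) = zetaR β := by
    rw [Summable.tsum_eq_zero_add hsum]
    rw [show ((0:ℕ):ℝ) ^ (-β) = 0 by rw [Nat.cast_zero, Real.zero_rpow hβ0], zero_add, zetaR]
    congr 1 with n
    push_cast
    ring_nf
  have h1 : ∑' n : ℕ, cE β (n : ℤ) = ENNReal.ofReal (zetaR β) := by
    have : ∀ n : ℕ, cE β (n : ℤ) = ENNReal.ofReal (((n : ℝ)) ^ (-β)) := by
      intro n
      rcases Nat.eq_zero_or_pos n with rfl | hn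
      · simp [cE, Real.zero_rpow hβ0]
      · rw [cE, if_neg (by exact_mod_cast hn.ne'), Int.cast_natCast,
          abs_of_nonneg (by positivity)]
    rw [tsum_congr this, ← hz,
      ENNReal.ofReal_tsum_of_nonneg (fun n => Real.rpow_nonneg (Nat.cast_nonneg n) _) hsum]
  have h2 : ∑' n : ℕ, cE β (-((n : ℤ) + 1)) = ENNReal.ofReal (zetaR β) := by
    have : ∀ n : ℕ, cE β (-((n : ℤ) + 1)) = ENNReal.ofReal (((n : ℝ) + 1) ^ (-β)) := by
      intro n
      rw [cE, if_neg (by omega)]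
      congr 1
      push_cast
      rw [abs_neg, abs_of_nonneg (by positivity)]
    rw [tsum_congr this, zetaR,
      ENNReal.ofReal_tsum_of_nonneg (fun n => Real.rpow_nonneg (by positivity) _) (zsum hβ)]
  rw [tsum_of_nat_of_neg_add_one ENNReal.summable ENNReal.summable, h1, h2,
    ← ENNReal.ofReal_add (zetaR_nonneg β) (zetaR_nonneg β)]
  ring_nf

lemma tsum_pi : ∀ (n : ℕ) (c : Fin n → ℤ → ℝ≥0∞),
    ∑' h : Fin n → ℤ, ∏ j, c j (h j) = ∏ j, ∑' k, c j k := by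
  intro n
  induction n with
  | zero =>
    intro c
    rw [Finset.univ_eq_empty, tsum_eq_single (default : Fin 0 → ℤ)
      (fun b hb => (hb (funext fun j => j.elim0)).elim)]
    simp
  | succ n ih =>
    intro c
    rw [← (Fin.consEquiv (fun _ : Fin (n + 1) => ℤ)).tsum_eq (fun h => ∏ j, c j (h j))]
    have key : ∀ x : ℤ × (Fin n → ℤ), (∏ j, c j ((Fin.consEquiv (fun _ : Fin (n+1) => ℤ)) x j))
        = c 0 x.1 * ∏ j : Fin n, c j.succ (x.2 j) := by
      intro x
      rw [Fin.prod_univ_succ]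
      simp [Fin.consEquiv]
    calc ∑' x : ℤ × (Fin n → ℤ), ∏ j, c j ((Fin.consEquiv (fun _ : Fin (n+1) => ℤ)) x j)
        = ∑' x : ℤ × (Fin n → ℤ), c 0 x.1 * ∏ j : Fin n, c j.succ (x.2 j) := tsum_congr key
      _ = ∑' (a : ℤ) (b : Fin n → ℤ), c 0 a * ∏ j : Fin n, c j.succ (b j) :=
          ENNReal.tsum_prod (f := fun (a : ℤ) (b : Fin n → ℤ) => c 0 a * ∏ j : Fin n, c j.succ (b j))
      _ = ∑' (a : ℤ), c 0 a * ∑' (b : Fin n → ℤ), ∏ j : Fin n, c j.succ (b j) := by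
          congr 1; ext a; exact ENNReal.tsum_mul_left
      _ = (∑' (a : ℤ), c 0 a) * ∑' (b : Fin n → ℤ), ∏ j : Fin n, c j.succ (b j) :=
          ENNReal.tsum_mul_right
      _ = ∏ j, ∑' k, c j k := by rw [ih, Fin.prod_univ_succ]




def aE (d : ℕ) (β : ℝ) (γ' : Finset (Fin d) → ℝ) (h : Fin d → ℤ) : ℝ≥0∞ :=
  if h = 0 then 0 else ENNReal.ofReal (γ' (suppF h) * ∏ j ∈ suppF h, |(h j : ℝ)| ^ (-β))

lemma suppF_nonempty {d : ℕ} {h : Fin d → ℤ} (hh : h ≠ 0) : (suppF h).Nonempty := by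
  obtain ⟨j, hj⟩ := Function.ne_iff.mp hh
  exact ⟨j, by simpa [suppF] using hj⟩

lemma mem_suppF {d : ℕ} {h : Fin d → ℤ} {j : Fin d} : j ∈ suppF h ↔ h j ≠ 0 := by
  simp [suppF]

lemma tsum_aE (d : ℕ) {β : ℝ} (hβ : 1 < β) (γ' : Finset (Fin d) → ℝ)
    (hγ' : ∀ u : Finset (Fin d), u.Nonempty → 0 ≤ γ' u) :
    ∑' h : Fin d → ℤ, aE d β γ' h = ENNReal.ofReal (Vd d β γ') := by
  classical
  set F := Finset.univ.filter (fun u : Finset (Fin d) => u.Nonempty) with hF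
  have step1 : ∀ h : Fin d → ℤ, aE d β γ' h
      = ∑ u ∈ F, (if suppF h = u then aE d β γ' h else 0) := by
    intro h
    by_cases hh : h = 0
    · subst hh; simp [aE]
    · rw [Finset.sum_ite_eq F (suppF h) (fun _ => aE d β γ' h),
        if_pos (by simp [hF, suppF_nonempty hh])]
  rw [tsum_congr step1, Summable.tsum_finsetSum (fun u _ => ENNReal.summable)]
  have step3 : ∀ u ∈ F, ∑' h : Fin d → ℤ, (if suppF h = u then aE d β γ' h else 0)
      = ENNReal.ofReal (γ' u) * ENNReal.ofReal (2 * zetaR β) ^ u.card := by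
    intro u hu
    have hune : u.Nonempty := by simpa [hF] using hu
    set cu : Fin d → ℤ → ℝ≥0∞ := fun j k => if j ∈ u then cE β k else c1 k with hcu
    have point : ∀ h : Fin d → ℤ, (if suppF h = u then aE d β γ' h else 0)
        = ENNReal.ofReal (γ' u) * ∏ j, cu j (h j) := by
      intro h
      by_cases hsu : suppF h = u
      · have hh : h ≠ 0 := by
          intro h0; subst h0
          apply hune.ne_empty
          rw [← hsu]; simp [suppF]
        rw [if_pos hsu, aE, if_neg hh, hsu]
        have hprod : ∏ j, cu j (h j)
            = (∏ j ∈ u, cu j (h j)) * ∏ j ∈ uᶜ, cu j (h j) :=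
          (Finset.prod_mul_prod_compl u _).symm
        have h1 : ∀ j ∈ u, cu j (h j) = ENNReal.ofReal (|(h j : ℝ)| ^ (-β)) := by
          intro j hj
          have : h j ≠ 0 := mem_suppF.mp (hsu ▸ hj)
          simp [hcu, hj, cE, this]
        have h2 : ∀ j ∈ uᶜ, cu j (h j) = 1 := by
          intro j hj
          have hju : j ∉ u := Finset.mem_compl.mp hj
          have : h j = 0 := by
            by_contra hne
            exact hju (hsu ▸ mem_suppF.mpr hne)
          simp [hcu, hju, c1, this]
        rw [hprod, Finset.prod_congr rfl h1, Finset.prod_congr rfl h2, Finset.prod_const_one,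
          mul_one, ← ENNReal.ofReal_prod_of_nonneg
            (fun j _ => Real.rpow_nonneg (abs_nonneg _) _),
          ← ENNReal.ofReal_mul (hγ' u hune)]
      · rw [if_neg hsu]
        have : ∃ j, ¬(j ∈ suppF h ↔ j ∈ u) := by
          by_contra hc
          push_neg at hc
          exact hsu (Finset.ext fun j => hc j)
        obtain ⟨j, hj⟩ := this
        have hzero : cu j (h j) = 0 := by
          by_cases hju : j ∈ u
          · have : h j = 0 := by
              by_contra hne
              exact hj ⟨fun _ => hju, fun _ => mem_suppF.mpr hne⟩
            simp [hcu, hju, this, cE]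
          · have : h j ≠ 0 := by
              by_contra hne
              exact hj ⟨fun hs => absurd (mem_suppF.mp hs) (by simp [hne]), fun hu' => absurd hu' hju⟩
            simp [hcu, hju, c1, this]
        rw [Finset.prod_eq_zero (Finset.mem_univ j) hzero, mul_zero]
    rw [tsum_congr point, ENNReal.tsum_mul_left, tsum_pi d cu]
    congr 1
    have : ∀ j : Fin d, (∑' k, cu j k) = if j ∈ u then ENNReal.ofReal (2 * zetaR β) else 1 := by
      intro j
      by_cases hj : j ∈ u <;> simp [hcu, hj, tsum_cE hβ, tsum_c1]
    rw [Finset.prod_congr rfl (fun j _ => this j), ← Finset.prod_mul_prod_compl u]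
    rw [Finset.prod_congr rfl (fun j (hj : j ∈ u) => if_pos hj),
      Finset.prod_congr rfl (fun j (hj : j ∈ uᶜ) => if_neg (Finset.mem_compl.mp hj)),
      Finset.prod_const, Finset.prod_const_one, mul_one]
  rw [Finset.sum_congr rfl step3, Vd, ← hF,
    ENNReal.ofReal_sum_of_nonneg (fun u hu => by
      have hune : u.Nonempty := by simpa [hF] using hu
      exact mul_nonneg (hγ' u hune) (pow_nonneg (mul_nonneg (by norm_num) (zetaR_nonneg β)) _))]
  refine Finset.sum_congr rfl fun u hu => ?_
  have hune : u.Nonempty := by simpa [hF] using hu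
  rw [ENNReal.ofReal_mul (hγ' u hune), ENNReal.ofReal_pow (mul_nonneg (by norm_num) (zetaR_nonneg β))]




lemma exists_lower_finset {β : Type*} (s : Finset β) (f : β → ℝ) (m : ℕ) (hm : m ≤ s.card) :
    ∃ Z : Finset β, Z ⊆ s ∧ Z.card = m ∧ ∀ z ∈ Z, ∀ z' ∈ s, z' ∉ Z → f z ≤ f z' := by
  classical
  induction m with
  | zero => exact ⟨∅, by simp⟩
  | succ n ih =>
    obtain ⟨Z, hZs, hcard, hprop⟩ := ih (le_trans (Nat.le_succ n) hm)
    have hne : (s \ Z).Nonempty := by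
      rw [← Finset.card_pos, Finset.card_sdiff_of_subset hZs]; omega
    obtain ⟨z₀, hz₀, hmin⟩ := Finset.exists_min_image (s \ Z) f hne
    have hz₀s : z₀ ∈ s := (Finset.mem_sdiff.mp hz₀).1
    have hz₀Z : z₀ ∉ Z := (Finset.mem_sdiff.mp hz₀).2
    refine ⟨insert z₀ Z, ?_, ?_, ?_⟩
    · exact Finset.insert_subset hz₀s hZs
    · rw [Finset.card_insert_of_notMem hz₀Z, hcard]
    · intro z hz z' hz' hz'nZ
      have hz'Z : z' ∉ Z := fun hc => hz'nZ (Finset.mem_insert_of_mem hc)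
      rcases Finset.mem_insert.mp hz with rfl | hzZ
      · exact hmin z' (Finset.mem_sdiff.mpr ⟨hz', hz'Z⟩)
      · exact hprop z hzZ z' hz' hz'Z

lemma genSet_card (d p : ℕ) (hp : 1 ≤ p) : (genSet d p).card = (p - 1) ^ d := by
  rw [genSet, Fintype.card_piFinset]
  have : (Finset.Icc (1 : ℤ) ((p : ℤ) - 1)).card = p - 1 := by
    rw [Int.card_Icc]
    omega
  simp [this]

lemma mem_genSet {d p : ℕ} {z : Fin d → ℤ} :
    z ∈ genSet d p ↔ ∀ j, z j ∈ Finset.Icc (1 : ℤ) ((p : ℤ) - 1) := by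
  simp [genSet, Fintype.mem_piFinset]

lemma count_le {d p : ℕ} (hp : p.Prime) {h : Fin d → ℤ} (j₀ : Fin d)
    (hj₀ : ¬ (p : ℤ) ∣ h j₀) :
    ((genSet d p).filter (fun z => (p : ℤ) ∣ ∑ j, h j * z j)).card ≤ (p - 1) ^ (d - 1) := by
  classical
  have hcard : (Fintype.piFinset
      (fun _ : {j : Fin d // j ≠ j₀} => Finset.Icc (1 : ℤ) ((p : ℤ) - 1))).card
      = (p - 1) ^ (d - 1) := by
    rw [Fintype.card_piFinset]
    have h1 : (Finset.Icc (1 : ℤ) ((p : ℤ) - 1)).card = p - 1 := by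
      rw [Int.card_Icc]; omega
    have h2 : Fintype.card {j : Fin d // j ≠ j₀} = d - 1 := by
      simp [Fintype.card_subtype_compl]
    simp [h1, h2]
  rw [← hcard]
  apply Finset.card_le_card_of_injOn (fun z (j : {j : Fin d // j ≠ j₀}) => z j.1)
  · intro z hz
    rw [Finset.mem_coe, Fintype.mem_piFinset]
    intro j
    exact mem_genSet.mp (Finset.mem_filter.mp hz).1 j.1
  · intro z hz w hw heq
    have hz' := Finset.mem_coe.mp hz
    have hw' := Finset.mem_coe.mp hw
    have hdz := (Finset.mem_filter.mp hz').2
    have hdw := (Finset.mem_filter.mp hw').2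
    have hoff : ∀ j : Fin d, j ≠ j₀ → z j = w j := by
      intro j hj
      exact congrFun heq ⟨j, hj⟩
    have hdvd : (p : ℤ) ∣ h j₀ * (z j₀ - w j₀) := by
      have hsub : (∑ j, h j * z j) - (∑ j, h j * w j) = h j₀ * (z j₀ - w j₀) := by
        rw [← Finset.sum_sub_distrib]
        rw [← Finset.add_sum_erase Finset.univ (fun j => h j * z j - h j * w j)
          (Finset.mem_univ j₀)]
        have : ∑ j ∈ Finset.univ.erase j₀, (h j * z j - h j * w j) = 0 := by
          apply Finset.sum_eq_zero
          intro j hj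
          rw [hoff j (Finset.mem_erase.mp hj).1]
          ring
        rw [this, add_zero]
        ring
      rw [← hsub]
      exact dvd_sub hdz hdw
    have hpprime : Prime (p : ℤ) := Nat.prime_iff_prime_int.mp hp
    have : (p : ℤ) ∣ z j₀ - w j₀ := (hpprime.dvd_mul.mp hdvd).resolve_left hj₀
    have hzb := Finset.mem_Icc.mp (mem_genSet.mp (Finset.mem_filter.mp hz').1 j₀)
    have hwb := Finset.mem_Icc.mp (mem_genSet.mp (Finset.mem_filter.mp hw').1 j₀)
    have hj₀eq : z j₀ = w j₀ := by
      by_contra hne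
      have hne0 : z j₀ - w j₀ ≠ 0 := sub_ne_zero.mpr hne
      have := Int.le_of_dvd (abs_pos.mpr hne0) ((dvd_abs _ _).mpr this)
      have hple : (p : ℤ) ≥ 2 := by exact_mod_cast hp.two_le
      rcases abs_cases (z j₀ - w j₀) with ⟨he, _⟩ | ⟨he, _⟩ <;> omega
    funext j
    by_cases hj : j = j₀
    · rw [hj, hj₀eq]
    · exact hoff j hj




variable {d : ℕ} {α lam : ℝ} {γ : Finset (Fin d) → ℝ}

lemma abs_pos_of_supp {h : Fin d → ℤ} {j : Fin d} (hj : j ∈ suppF h) : (0:ℝ) < |(h j : ℝ)| := by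
  have := mem_suppF.mp hj
  simp only [abs_pos, ne_eq, Int.cast_eq_zero]
  exact this

lemma rKor_pos (hγ : ∀ u : Finset (Fin d), u.Nonempty → 0 < γ u)
    {h : Fin d → ℤ} (hh : h ≠ 0) : 0 < rKor d α γ h := by
  rw [rKor, if_neg hh]
  apply mul_pos (inv_pos.mpr (hγ _ (suppF_nonempty hh)))
  exact Finset.prod_pos fun j hj => Real.rpow_pos_of_pos (abs_pos_of_supp hj) _

lemma rKor_nonneg (hγ : ∀ u : Finset (Fin d), u.Nonempty → 0 < γ u)
    {h : Fin d → ℤ} (hh : h ≠ 0) : 0 ≤ rKor d α γ h := (rKor_pos hγ hh).le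

lemma rKor_rpow (hγ : ∀ u : Finset (Fin d), u.Nonempty → 0 < γ u)
    {h : Fin d → ℤ} (hh : h ≠ 0) :
    (rKor d α γ h) ^ (-(1/lam)) =
      (γ (suppF h)) ^ (1/lam) * ∏ j ∈ suppF h, |(h j : ℝ)| ^ (-(α/lam)) := by
  have hγpos := hγ _ (suppF_nonempty hh)
  rw [rKor, if_neg hh,
    Real.mul_rpow (inv_nonneg.mpr hγpos.le)
      (Finset.prod_nonneg fun j _ => Real.rpow_nonneg (abs_nonneg _) _),
    Real.inv_rpow hγpos.le, Real.rpow_neg hγpos.le, inv_inv,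
    ← Real.finset_prod_rpow _ _ (fun j _ => Real.rpow_nonneg (abs_nonneg _) _)]
  congr 1
  refine Finset.prod_congr rfl fun j hj => ?_
  rw [← Real.rpow_mul (abs_nonneg _)]
  congr 1
  ring

lemma rKor_sq_inv (hγ : ∀ u : Finset (Fin d), u.Nonempty → 0 < γ u)
    (hlam : 0 < lam) {h : Fin d → ℤ} (hh : h ≠ 0) :
    ((rKor d α γ h) ^ 2)⁻¹ = ((rKor d α γ h) ^ (-(1/lam))) ^ (2 * lam) := by
  have hx := rKor_pos (α := α) hγ hh
  rw [← Real.rpow_mul hx.le]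
  have : -(1/lam) * (2 * lam) = -2 := by field_simp
  rw [this, Real.rpow_neg hx.le]
  congr 1
  rw [show (2:ℝ) = ((2:ℕ):ℝ) by norm_num, Real.rpow_natCast]

lemma aE_eq_rKor (hγ : ∀ u : Finset (Fin d), u.Nonempty → 0 < γ u)
    {h : Fin d → ℤ} (hh : h ≠ 0) :
    aE d (α/lam) (fun u => γ u ^ (1/lam)) h
      = ENNReal.ofReal ((rKor d α γ h) ^ (-(1/lam))) := by
  rw [aE, if_neg hh, rKor_rpow hγ hh]

lemma aE_smul_le {β : ℝ} (hβ : 0 < β) {p : ℕ} (hp : 2 ≤ p)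
    {γ' : Finset (Fin d) → ℝ} (hγ' : ∀ u : Finset (Fin d), u.Nonempty → 0 ≤ γ' u)
    (m : Fin d → ℤ) :
    aE d β γ' (fun j => (p : ℤ) * m j)
      ≤ ENNReal.ofReal ((p : ℝ) ^ (-β)) * aE d β γ' m := by
  by_cases hm : m = 0
  · subst hm
    have h0 : (fun j : Fin d => (p : ℤ) * (0 : Fin d → ℤ) j) = 0 := by funext j; simp
    rw [h0]
    simp [aE]
  · have hpm : (fun j => (p : ℤ) * m j) ≠ 0 := by
      obtain ⟨j, hj⟩ := Function.ne_iff.mp hm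
      intro hc
      have := congrFun hc j
      simp only [Pi.zero_apply, mul_eq_zero] at this
      rcases this with h1 | h1
      · exact absurd (by exact_mod_cast h1) (by omega : (p:ℕ) ≠ 0)
      · exact hj (by simpa using h1)
    have hsupp : suppF (fun j => (p : ℤ) * m j) = suppF m := by
      ext j
      simp only [mem_suppF, mul_ne_zero_iff]
      constructor
      · exact fun hx => hx.2
      · exact fun hx => ⟨by exact_mod_cast (by omega : (p:ℕ) ≠ 0), hx⟩
    rw [aE, if_neg hpm, aE, if_neg hm, hsupp]
    rw [← ENNReal.ofReal_mul (Real.rpow_nonneg (Nat.cast_nonneg p) _)]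
    apply ENNReal.ofReal_le_ofReal
    push_cast
    have hppos : (0:ℝ) < p := by positivity
    have hprod : ∏ j ∈ suppF m, |(p : ℝ) * (m j : ℝ)| ^ (-β)
        = ((p:ℝ) ^ (-β)) ^ (suppF m).card * ∏ j ∈ suppF m, |(m j : ℝ)| ^ (-β) := by
      rw [← Finset.prod_const, ← Finset.prod_mul_distrib]
      refine Finset.prod_congr rfl fun j hj => ?_
      rw [abs_mul, abs_of_nonneg hppos.le,
        Real.mul_rpow hppos.le (abs_nonneg _)]
    rw [hprod]
    have hcard : 1 ≤ (suppF m).card := Finset.card_pos.mpr (suppF_nonempty hm)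
    have hfac : ((p:ℝ) ^ (-β)) ^ (suppF m).card ≤ (p:ℝ) ^ (-β) := by
      have h1 : (p:ℝ) ^ (-β) ≤ 1 :=
        Real.rpow_le_one_of_one_le_of_nonpos (by exact_mod_cast hp.trans' (by norm_num) : (1:ℝ) ≤ p) (by linarith)
      calc ((p:ℝ) ^ (-β)) ^ (suppF m).card ≤ ((p:ℝ) ^ (-β)) ^ 1 :=
            pow_le_pow_of_le_one (Real.rpow_nonneg hppos.le _) h1 hcard
        _ = (p:ℝ) ^ (-β) := pow_one _
    have hγu := hγ' _ (suppF_nonempty hm)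
    have hprod_nonneg : (0:ℝ) ≤ ∏ j ∈ suppF m, |(m j : ℝ)| ^ (-β) :=
      Finset.prod_nonneg fun j _ => Real.rpow_nonneg (abs_nonneg _) _
    calc γ' (suppF m) * (((p:ℝ) ^ (-β)) ^ (suppF m).card * ∏ j ∈ suppF m, |(m j : ℝ)| ^ (-β))
        ≤ γ' (suppF m) * ((p:ℝ) ^ (-β) * ∏ j ∈ suppF m, |(m j : ℝ)| ^ (-β)) := by
          apply mul_le_mul_of_nonneg_left _ hγu
          exact mul_le_mul_of_nonneg_right hfac hprod_nonneg
      _ = (p:ℝ) ^ (-β) * (γ' (suppF m) * ∏ j ∈ suppF m, |(m j : ℝ)| ^ (-β)) := by ring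




lemma Edet_le_of_SE_le {d p : ℕ} {α l : ℝ} {γ : Finset (Fin d) → ℝ}
    (hγ : ∀ u : Finset (Fin d), u.Nonempty → 0 < γ u)
    (hl : 0 < l) (hl2 : 1 ≤ 2 * l) {z : Fin d → ℤ} {T : ℝ} (hT : 0 ≤ T)
    (hSE : (∑' h : dualLat d p z, aE d (α/l) (fun u => γ u ^ (1/l)) h.1)
      ≤ ENNReal.ofReal T) :
    Edet d α γ p z ≤ T ^ l := by
  set γ' := fun u : Finset (Fin d) => γ u ^ (1/l) with hγ'
  set s := 2 * l with hs
  set SE := ∑' h : dualLat d p z, aE d (α/l) γ' h.1 with hSEdef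
  by_cases hsum : Summable (fun h : dualLat d p z => ((rKor d α γ h.1) ^ 2)⁻¹)
  · have hofReal : ENNReal.ofReal (∑' h : dualLat d p z, ((rKor d α γ h.1) ^ 2)⁻¹)
        = ∑' h : dualLat d p z, ENNReal.ofReal (((rKor d α γ h.1) ^ 2)⁻¹) :=
      ENNReal.ofReal_tsum_of_nonneg (fun h => inv_nonneg.mpr (sq_nonneg _)) hsum
    have hpoint : ∀ h : dualLat d p z,
        ENNReal.ofReal (((rKor d α γ h.1) ^ 2)⁻¹) = (aE d (α/l) γ' h.1) ^ s := by
      intro h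
      have hh : h.1 ≠ 0 := h.2.1
      rw [rKor_sq_inv hγ hl hh, aE_eq_rKor hγ hh,
        ← ENNReal.ofReal_rpow_of_nonneg (Real.rpow_nonneg (rKor_nonneg hγ hh) _)
          (by linarith : (0:ℝ) ≤ 2 * l)]
    have hbound : ∑' h : dualLat d p z, (aE d (α/l) γ' h.1) ^ s ≤ SE ^ s := by
      have hs1 : (0:ℝ) ≤ s - 1 := by linarith
      have hstep : ∀ h : dualLat d p z, (aE d (α/l) γ' h.1) ^ s
          ≤ SE ^ (s - 1) * aE d (α/l) γ' h.1 := by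
        intro h
        have hle : aE d (α/l) γ' h.1 ≤ SE := ENNReal.le_tsum h
        calc (aE d (α/l) γ' h.1) ^ s
            = (aE d (α/l) γ' h.1) ^ (s - 1) * (aE d (α/l) γ' h.1) ^ (1:ℝ) := by
              rw [← ENNReal.rpow_add_of_nonneg _ _ hs1 zero_le_one]
              norm_num
          _ ≤ SE ^ (s - 1) * aE d (α/l) γ' h.1 := by
              rw [ENNReal.rpow_one]
              exact mul_le_mul' (ENNReal.rpow_le_rpow hle hs1) le_rfl
      calc ∑' h : dualLat d p z, (aE d (α/l) γ' h.1) ^ s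
          ≤ ∑' h : dualLat d p z, SE ^ (s - 1) * aE d (α/l) γ' h.1 := ENNReal.tsum_le_tsum hstep
        _ = SE ^ (s - 1) * SE := by rw [ENNReal.tsum_mul_left]
        _ = SE ^ (s - 1) * SE ^ (1:ℝ) := by rw [ENNReal.rpow_one]
        _ = SE ^ s := by rw [← ENNReal.rpow_add_of_nonneg _ _ hs1 zero_le_one]; norm_num
    have hSEs : SE ^ s ≤ ENNReal.ofReal (T ^ s) := by
      rw [← ENNReal.ofReal_rpow_of_nonneg hT (by linarith : (0:ℝ) ≤ s)]
      exact ENNReal.rpow_le_rpow hSE (by linarith)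
    have hE2 : (∑' h : dualLat d p z, ((rKor d α γ h.1) ^ 2)⁻¹) ≤ T ^ s := by
      rw [← ENNReal.ofReal_le_ofReal_iff (Real.rpow_nonneg hT _), hofReal, tsum_congr hpoint]
      exact le_trans hbound hSEs
    rw [Edet]
    calc Real.sqrt (∑' h : dualLat d p z, ((rKor d α γ h.1) ^ 2)⁻¹)
        ≤ Real.sqrt (T ^ s) := Real.sqrt_le_sqrt hE2
      _ = (T ^ s) ^ (1/(2:ℝ)) := Real.sqrt_eq_rpow _
      _ = T ^ l := by
          rw [← Real.rpow_mul hT]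
          congr 1
          rw [hs]; ring
  · rw [Edet, tsum_eq_zero_of_not_summable hsum, Real.sqrt_zero]
    exact Real.rpow_nonneg hT l




-- total sum bound
lemma total_bound {d p : ℕ} (hp : p.Prime) (hd : d ≠ 0) {β : ℝ} (hβ : 1 < β)
    {γ' : Finset (Fin d) → ℝ} (hγ' : ∀ u : Finset (Fin d), u.Nonempty → 0 ≤ γ' u) :
    ∑ z ∈ genSet d p, ∑' h : dualLat d p z, aE d β γ' h.1
      ≤ 2 * ((((p-1)^(d-1) : ℕ)) : ℝ≥0∞) * ENNReal.ofReal (Vd d β γ') := by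
  classical
  set VE := ENNReal.ofReal (Vd d β γ') with hVE
  set N1 : ℕ := (p-1)^(d-1) with hN1
  set N2 : ℕ := (p-1)^d with hN2
  have hp2 : 2 ≤ p := hp.two_le
  -- rewrite subtype tsum as indicator tsum
  have hind : ∀ z : Fin d → ℤ, (∑' h : dualLat d p z, aE d β γ' h.1)
      = ∑' h : Fin d → ℤ, (if (p : ℤ) ∣ ∑ j, h j * z j then aE d β γ' h else 0) := by
    intro z
    rw [tsum_subtype (dualLat d p z) (fun h => aE d β γ' h)]
    refine tsum_congr fun h => ?_
    rw [Set.indicator_apply]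
    by_cases hh : h = 0
    · subst hh; simp [dualLat, aE]
    · by_cases hdvd : (p : ℤ) ∣ ∑ j, h j * (z j)
      · rw [if_pos ⟨hh, hdvd⟩, if_pos hdvd]
      · rw [if_neg (fun hc => hdvd hc.2), if_neg hdvd]
  -- swap sums
  have hswap : ∑ z ∈ genSet d p, ∑' h : dualLat d p z, aE d β γ' h.1
      = ∑' h : Fin d → ℤ,
          ((((genSet d p).filter (fun z => (p : ℤ) ∣ ∑ j, h j * z j)).card : ℝ≥0∞)
            * aE d β γ' h) := by
    rw [Finset.sum_congr rfl (fun z _ => hind z),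
      ← Summable.tsum_finsetSum (fun z _ => ENNReal.summable)]
    refine tsum_congr fun h => ?_
    rw [Finset.sum_ite, Finset.sum_const, Finset.sum_const_zero, add_zero, nsmul_eq_mul]
  rw [hswap]
  -- pointwise bound
  have hpt : ∀ h : Fin d → ℤ,
      ((((genSet d p).filter (fun z => (p : ℤ) ∣ ∑ j, h j * z j)).card : ℝ≥0∞) * aE d β γ' h)
      ≤ (N1 : ℝ≥0∞) * aE d β γ' h
        + (if ∀ j, (p : ℤ) ∣ h j then (N2 : ℝ≥0∞) * aE d β γ' h else 0) := by
    intro h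
    by_cases hall : ∀ j, (p : ℤ) ∣ h j
    · rw [if_pos hall]
      refine le_add_left ?_
      refine mul_le_mul' ?_ le_rfl
      have hcf := Finset.card_filter_le (genSet d p) (fun z => (p:ℤ) ∣ ∑ j, h j * z j)
      rw [genSet_card d p hp.one_lt.le] at hcf
      exact_mod_cast hcf
    · push_neg at hall
      obtain ⟨j₀, hj₀⟩ := hall
      rw [if_neg (by push_neg; exact ⟨j₀, hj₀⟩), add_zero]
      exact mul_le_mul' (by exact_mod_cast count_le hp j₀ hj₀) le_rfl
  refine le_trans (ENNReal.tsum_le_tsum hpt) ?_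
  rw [ENNReal.tsum_add, ENNReal.tsum_mul_left, tsum_aE d hβ γ' hγ']
  -- second piece via scaling
  have hsecond : ∑' h : Fin d → ℤ, (if ∀ j, (p : ℤ) ∣ h j then (N2 : ℝ≥0∞) * aE d β γ' h else 0)
      ≤ (N2 : ℝ≥0∞) * ENNReal.ofReal ((p:ℝ) ^ (-β)) * VE := by
    have hinj : Function.Injective (fun (m : Fin d → ℤ) (j : Fin d) => (p : ℤ) * m j) := by
      intro m m' hmm
      funext j
      have := congrFun hmm j
      exact mul_left_cancel₀ (by exact_mod_cast hp.pos.ne') this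
    have hvanish : ∀ h : Fin d → ℤ, h ∉ Set.range (fun (m : Fin d → ℤ) (j : Fin d) => (p : ℤ) * m j) →
        (if ∀ j, (p : ℤ) ∣ h j then (N2 : ℝ≥0∞) * aE d β γ' h else 0) = 0 := by
      intro h hr
      rw [if_neg]
      intro hall
      exact hr ⟨fun j => h j / p, funext fun j => Int.mul_ediv_cancel' (hall j)⟩
    rw [← hinj.tsum_eq (Function.support_subset_iff'.mpr hvanish)]
    have : ∀ m : Fin d → ℤ,
        (if ∀ j, (p : ℤ) ∣ ((fun (m : Fin d → ℤ) (j : Fin d) => (p : ℤ) * m j) m) j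
          then (N2 : ℝ≥0∞) * aE d β γ' (fun j => (p : ℤ) * m j) else 0)
        ≤ (N2 : ℝ≥0∞) * (ENNReal.ofReal ((p:ℝ) ^ (-β)) * aE d β γ' m) := by
      intro m
      rw [if_pos (fun j => Dvd.intro (m j) rfl)]
      exact mul_le_mul' le_rfl (aE_smul_le (by linarith) hp2 hγ' m)
    refine le_trans (ENNReal.tsum_le_tsum this) ?_
    rw [ENNReal.tsum_mul_left, ENNReal.tsum_mul_left, tsum_aE d hβ γ' hγ', ← hVE]
    rw [mul_assoc]
  refine le_trans (add_le_add le_rfl hsecond) ?_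
  -- N2 * ofReal (p^(-β)) ≤ N1
  have hkey : (N2 : ℝ≥0∞) * ENNReal.ofReal ((p:ℝ) ^ (-β)) ≤ (N1 : ℝ≥0∞) := by
    have h1 : (p:ℝ) ^ (-β) ≤ (p:ℝ)⁻¹ := by
      rw [← Real.rpow_neg_one]
      exact Real.rpow_le_rpow_of_exponent_le (by exact_mod_cast hp2.trans' (by norm_num)) (by linarith)
    have hN2N1 : N2 = N1 * (p - 1) := by
      rw [hN1, hN2, ← pow_succ]
      congr 1
      omega
    calc (N2 : ℝ≥0∞) * ENNReal.ofReal ((p:ℝ) ^ (-β))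
        ≤ (N2 : ℝ≥0∞) * ENNReal.ofReal ((p:ℝ)⁻¹) :=
          mul_le_mul' le_rfl (ENNReal.ofReal_le_ofReal h1)
      _ = (N1 : ℝ≥0∞) * (((p - 1 : ℕ) : ℝ≥0∞) * ENNReal.ofReal ((p:ℝ)⁻¹)) := by
          rw [hN2N1]; push_cast; ring
      _ ≤ (N1 : ℝ≥0∞) * 1 := by
          refine mul_le_mul' le_rfl ?_
          rw [← ENNReal.ofReal_natCast (p-1), ← ENNReal.ofReal_mul (by positivity),
            ← ENNReal.ofReal_one]
          refine ENNReal.ofReal_le_ofReal ?_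
          rw [Nat.cast_sub hp.one_lt.le]
          have hppos : (0:ℝ) < p := by positivity
          rw [← div_eq_mul_inv, div_le_one hppos]
          norm_num
      _ = (N1 : ℝ≥0∞) := mul_one _
  calc (N1 : ℝ≥0∞) * VE + (N2 : ℝ≥0∞) * ENNReal.ofReal ((p:ℝ) ^ (-β)) * VE
      ≤ (N1 : ℝ≥0∞) * VE + (N1 : ℝ≥0∞) * VE := add_le_add le_rfl (mul_le_mul' hkey le_rfl)
    _ = 2 * (N1 : ℝ≥0∞) * VE := by ring




lemma Vd_nonneg {d : ℕ} {β : ℝ} {γ' : Finset (Fin d) → ℝ}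
    (hγ' : ∀ u : Finset (Fin d), u.Nonempty → 0 ≤ γ' u) : 0 ≤ Vd d β γ' := by
  refine Finset.sum_nonneg fun u hu => ?_
  have hune : u.Nonempty := (Finset.mem_filter.mp hu).2
  exact mul_nonneg (hγ' u hune) (pow_nonneg (mul_nonneg (by norm_num) (zetaR_nonneg β)) _)

lemma good_set (p d : ℕ) (hp : p.Prime) (hd : d ≠ 0) {τ α l : ℝ}
    (hτ0 : 0 < τ) (hτ1 : τ < 1) (hl : 1/2 ≤ l) (hlα : l < α)
    (γ : Finset (Fin d) → ℝ) (hγ : ∀ u : Finset (Fin d), u.Nonempty → 0 < γ u ∧ γ u ≤ 1) :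
    ∃ good : Finset (Fin d → ℤ), good ⊆ genSet d p ∧
      τ * ((p:ℝ)-1)^d ≤ good.card ∧
      ∀ z ∈ good, Edet d α γ p z
        ≤ (2 / ((1-τ) * ((p:ℝ)-1)) * Vd d (α/l) (fun u => γ u ^ (1/l))) ^ l := by
  classical
  have hl0 : 0 < l := lt_of_lt_of_le (by norm_num) hl
  have hβ : 1 < α / l := (one_lt_div hl0).mpr hlα
  set β := α / l with hβdef
  set γ' := fun u : Finset (Fin d) => γ u ^ (1/l) with hγ'def
  have hγ'pos : ∀ u : Finset (Fin d), u.Nonempty → 0 < γ' u :=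
    fun u hu => Real.rpow_pos_of_pos (hγ u hu).1 _
  have hγ'nonneg : ∀ u : Finset (Fin d), u.Nonempty → 0 ≤ γ' u :=
    fun u hu => (hγ'pos u hu).le
  set V := Vd d β γ' with hVdef
  have hV : 0 < V := by
    refine Finset.sum_pos (fun u hu => ?_) ?_
    · have hune : u.Nonempty := (Finset.mem_filter.mp hu).2
      exact mul_pos (hγ'pos u hune)
        (pow_pos (by have := zetaR_pos hβ; linarith) _)
    · exact ⟨{⟨0, Nat.pos_of_ne_zero hd⟩}, by simp⟩
  have hp2 : 2 ≤ p := hp.two_le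
  have hpR : (0:ℝ) < (p:ℝ) - 1 := by
    have : (2:ℝ) ≤ p := by exact_mod_cast hp2
    linarith
  have hτ' : (0:ℝ) < 1 - τ := by linarith
  set T := 2 / ((1-τ) * ((p:ℝ)-1)) * V with hTdef
  have hT : 0 < T := mul_pos (div_pos (by norm_num) (mul_pos hτ' hpR)) hV
  set TE := ENNReal.ofReal T with hTEdef
  set SE := fun z : Fin d → ℤ => ∑' h : dualLat d p z, aE d β γ' h.1 with hSEdef
  set good := (genSet d p).filter (fun z => SE z ≤ TE) with hgood
  set bad := (genSet d p).filter (fun z => ¬ (SE z ≤ TE)) with hbad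
  have hcards : good.card + bad.card = (genSet d p).card :=
    Finset.card_filter_add_card_filter_not _
  -- Markov
  have hmarkov : (bad.card : ℝ≥0∞) * TE ≤ ENNReal.ofReal ((1-τ) * ((p:ℝ)-1)^d) * TE := by
    have h1 : (bad.card : ℝ≥0∞) * TE ≤ ∑ z ∈ bad, SE z := by
      rw [← nsmul_eq_mul]
      exact Finset.card_nsmul_le_sum bad SE TE
        (fun z hz => le_of_not_ge fun hc => ((Finset.mem_filter.mp hz).2 hc).elim)
    have h2 : ∑ z ∈ bad, SE z ≤ ∑ z ∈ genSet d p, SE z :=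
      Finset.sum_le_sum_of_subset (Finset.filter_subset _ _)
    have h3 := total_bound hp hd hβ hγ'nonneg
    have h4 : 2 * ((((p-1)^(d-1) : ℕ)) : ℝ≥0∞) * ENNReal.ofReal V
        = ENNReal.ofReal ((1-τ) * ((p:ℝ)-1)^d) * TE := by
      rw [hTEdef, ← ENNReal.ofReal_mul (by positivity)]
      have hcast : (((p-1)^(d-1) : ℕ) : ℝ≥0∞) = ENNReal.ofReal (((p:ℝ)-1)^(d-1)) := by
        rw [← ENNReal.ofReal_natCast]
        congr 1
        push_cast [Nat.cast_sub hp.one_lt.le]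
        ring
      rw [hcast, ← ENNReal.ofReal_ofNat, ← ENNReal.ofReal_mul (by norm_num),
        ← ENNReal.ofReal_mul (by positivity)]
      congr 1
      have hpow : ((p:ℝ)-1)^d = ((p:ℝ)-1)^(d-1) * ((p:ℝ)-1) := by
        conv_lhs => rw [show d = (d-1)+1 by omega]
        rw [pow_succ]
      rw [hTdef, hpow]
      field_simp
    calc (bad.card : ℝ≥0∞) * TE ≤ ∑ z ∈ genSet d p, SE z := le_trans h1 h2
      _ ≤ 2 * ((((p-1)^(d-1) : ℕ)) : ℝ≥0∞) * ENNReal.ofReal V := h3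
      _ = ENNReal.ofReal ((1-τ) * ((p:ℝ)-1)^d) * TE := h4
  have hTE0 : TE ≠ 0 := (ENNReal.ofReal_pos.mpr hT).ne'
  have hbadcard : (bad.card : ℝ) ≤ (1-τ) * ((p:ℝ)-1)^d := by
    have := (ENNReal.mul_le_mul_iff_left hTE0 ENNReal.ofReal_ne_top).mp hmarkov
    rw [← ENNReal.ofReal_natCast bad.card] at this
    exact (ENNReal.ofReal_le_ofReal_iff (by positivity)).mp this
  have hgoodcard : τ * ((p:ℝ)-1)^d ≤ (good.card : ℝ) := by
    have hgcard : (genSet d p).card = (p-1)^d := genSet_card d p hp.one_lt.le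
    have hcast : (((p-1)^d : ℕ) : ℝ) = ((p:ℝ)-1)^d := by
      push_cast [Nat.cast_sub hp.one_lt.le]
      ring
    have : (good.card : ℝ) + (bad.card : ℝ) = ((p:ℝ)-1)^d := by
      rw [← hcast]
      exact_mod_cast congrArg (fun n : ℕ => (n:ℝ)) (hcards.trans hgcard)
    nlinarith
  refine ⟨good, Finset.filter_subset _ _, hgoodcard, ?_⟩
  intro z hz
  have hSEz : SE z ≤ TE := (Finset.mem_filter.mp hz).2
  exact Edet_le_of_SE_le (fun u hu => (hγ u hu).1) hl0 (by linarith) hT.le hSEz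



/-- there is a large set of good generating vectors. -/
theorem stmt_0 (p d : ℕ) (hp : p.Prime) (τ α : ℝ) (hτ : τ ∈ Set.Ioo (0 : ℝ) 1)
    (hα : 1 / 2 < α) (γ : Finset (Fin d) → ℝ)
    (hγ : ∀ u : Finset (Fin d), u.Nonempty → 0 < γ u ∧ γ u ≤ 1) :
    ∃ Z : Finset (Fin d → ℤ), Z ⊆ genSet d p ∧
      ⌈τ * ((p : ℝ) - 1) ^ d⌉₊ ≤ Z.card ∧
      ∀ z ∈ Z, Edet d α γ p z ≤
        ⨅ lam : Set.Ico (1 / 2 : ℝ) α,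
          (2 / ((1 - τ) * ((p : ℝ) - 1)) *
            Vd d (α / (lam : ℝ)) (fun u => γ u ^ (1 / (lam : ℝ)))) ^ (lam : ℝ) := by
  classical
  obtain ⟨hτ0, hτ1⟩ := hτ
  have hp2 : 2 ≤ p := hp.two_le
  have hpR : (0:ℝ) < (p:ℝ) - 1 := by
    have : (2:ℝ) ≤ p := by exact_mod_cast hp2
    linarith
  have hcast : (((p-1)^d : ℕ) : ℝ) = ((p:ℝ)-1)^d := by
    push_cast [Nat.cast_sub hp.one_lt.le]
    ring
  set m := ⌈τ * ((p : ℝ) - 1) ^ d⌉₊ with hm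
  have hmle : m ≤ (genSet d p).card := by
    rw [genSet_card d p hp.one_lt.le]
    refine Nat.ceil_le.mpr ?_
    rw [hcast]
    exact mul_le_of_le_one_left (by positivity) hτ1.le
  obtain ⟨Z, hZsub, hZcard, hZlow⟩ := exists_lower_finset (genSet d p) (Edet d α γ p) m hmle
  refine ⟨Z, hZsub, by rw [hZcard], ?_⟩
  intro z hz
  have hne : Nonempty (Set.Ico (1/2 : ℝ) α) := ⟨⟨1/2, le_refl _, hα⟩⟩
  refine le_ciInf ?_
  rintro ⟨l, hl12, hlα⟩
  show Edet d α γ p z ≤ (2 / ((1 - τ) * ((p : ℝ) - 1)) * Vd d (α / l) (fun u => γ u ^ (1 / l))) ^ l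
  have hγ'nonneg : ∀ u : Finset (Fin d), u.Nonempty → 0 ≤ (fun u => γ u ^ (1/l)) u :=
    fun u hu => Real.rpow_nonneg (hγ u hu).1.le _
  have hTnonneg : 0 ≤ 2 / ((1 - τ) * ((p : ℝ) - 1)) * Vd d (α / l) (fun u => γ u ^ (1 / l)) := by
    have h1 : (0:ℝ) ≤ 2 / ((1 - τ) * ((p : ℝ) - 1)) := by
      apply div_nonneg (by norm_num)
      have : (0:ℝ) < 1 - τ := by linarith
      positivity
    exact mul_nonneg h1 (Vd_nonneg hγ'nonneg)
  by_cases hd : d = 0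
  · subst hd
    have hiso : IsEmpty (dualLat 0 p z) := by
      constructor
      rintro ⟨h, hh, -⟩
      exact hh (Subsingleton.elim h 0)
    haveI := hiso
    rw [Edet, tsum_empty, Real.sqrt_zero]
    exact Real.rpow_nonneg hTnonneg l
  · obtain ⟨good, hgsub, hgcard, hgood⟩ :=
      good_set p d hp hd hτ0 hτ1 hl12 hlα γ hγ
    by_cases hzg : z ∈ good
    · exact hgood z hzg
    · have hnotsub : ¬ good ⊆ Z := by
        intro hsub
        have h1 : good ⊆ Z.erase z := fun x hx =>
          Finset.mem_erase.mpr ⟨fun hc => hzg (hc ▸ hx), hsub hx⟩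
        have h2 : good.card ≤ m - 1 := by
          have := Finset.card_le_card h1
          rw [Finset.card_erase_of_mem hz, hZcard] at this
          exact this
        have h3 : m ≤ good.card := Nat.ceil_le.mpr hgcard
        have h4 : 1 ≤ m := by
          rw [hm]
          refine Nat.one_le_ceil_iff.mpr ?_
          positivity
        omega
      obtain ⟨z', hz'g, hz'Z⟩ := Finset.not_subset.mp hnotsub
      exact le_trans (hZlow z hz z' (hgsub hz'g) hz'Z) (hgood z' hz'g)


end
end

section
/- Let N be an odd natural number, let X_1,…,X_N be independent real-valued random variables, let I ⊆ ℝ be an interval, and let τ < 1/2 be such that P(X_i ∉ I) ≤ τ for every i. Then P(median{X_1,…,X_N} ∉ I) ≤ (1/2)·(4τ(1−τ))^{N/2}. -/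
open scoped BigOperators Classical

noncomputable section

open Finset

lemma countP_ofFn {N : ℕ} (f : Fin N → ℝ) (p : ℝ → Prop) [DecidablePred p] :
    Multiset.countP p (↑(List.ofFn f)) = (univ.filter fun i => p (f i)).card := by
  rw [← Fin.univ_val_map, Multiset.countP_map]
  rfl

open Finset in
lemma median_count {N : ℕ} (hN : Odd N) (f : Fin N → ℝ) {I : Set ℝ} (hI : I.OrdConnected)
    (h : medianR f ∉ I) : (N + 1) / 2 ≤ (univ.filter fun i => f i ∉ I).card := by
  classical
  obtain ⟨t, ht⟩ := hN
  by_contra h'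
  push_neg at h'
  set l := List.insertionSort (· ≤ ·) (List.ofFn f) with hldef
  have hperm : l.Perm (List.ofFn f) := List.perm_insertionSort _ _
  have hsort : l.Pairwise (· ≤ ·) := List.pairwise_insertionSort _ _
  have hlen : l.length = N := by rw [hperm.length_eq, List.length_ofFn]
  have htN : t < N := by omega
  have hm : medianR f = l.get ⟨t, by omega⟩ := by
    rw [medianR, ← hldef, List.getD_eq_getElem _ _ (by omega : (N-1)/2 < l.length)]
    congr 1
    omega
  set m := medianR f with hmdef
  -- counts in terms of multiset of l
  have hcoe : (↑(List.ofFn f) : Multiset ℝ) = (↑l : Multiset ℝ) := by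
    exact (Multiset.coe_eq_coe.2 hperm).symm
  have hl_ofFn : (↑l : Multiset ℝ) = ↑(List.ofFn l.get) := by rw [List.ofFn_get]
  have key : ∀ p : ℝ → Prop, (univ.filter fun i : Fin N => p (f i)).card =
      ((univ : Finset (Fin l.length)).filter fun i => p (l.get i)).card := by
    intro p
    rw [← countP_ofFn f p, hcoe, hl_ofFn, countP_ofFn]
  -- lower bound on count of (· ≤ m)
  have hle : t + 1 ≤ (univ.filter fun i : Fin N => f i ≤ m).card := by
    rw [key (fun x => x ≤ m)]
    calc t + 1 = (Iic (⟨t, by omega⟩ : Fin l.length)).card := by rw [Fin.card_Iic]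
    _ ≤ _ := by
        apply card_le_card
        intro i hi
        simp only [mem_Iic] at hi
        simp only [mem_filter, mem_univ, true_and]
        rw [hm]
        exact hsort.rel_get_of_le hi
  have hge : t + 1 ≤ (univ.filter fun i : Fin N => m ≤ f i).card := by
    rw [key (fun x => m ≤ x)]
    calc t + 1 = (Ici (⟨t, by omega⟩ : Fin l.length)).card := by
          rw [Fin.card_Ici, Fin.val_mk]; omega
    _ ≤ _ := by
        apply card_le_card
        intro i hi
        simp only [mem_Ici] at hi
        simp only [mem_filter, mem_univ, true_and]
        rw [hm]
        exact hsort.rel_get_of_le hi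
  -- the good set is large
  have hsplit := card_filter_add_card_filter_not (s := (univ : Finset (Fin N)))
    (p := fun i => f i ∉ I)
  have hG : t + 1 ≤ (univ.filter fun i : Fin N => ¬ f i ∉ I).card := by
    have : (univ : Finset (Fin N)).card = N := by simp
    omega
  -- intersect
  have inter1 : ∀ (L G : Finset (Fin N)), t + 1 ≤ L.card → t + 1 ≤ G.card →
      (L ∩ G).Nonempty := by
    intro L G hL hGc
    rw [← card_pos]
    have hu : (L ∪ G).card ≤ N := by
      calc (L ∪ G).card ≤ (univ : Finset (Fin N)).card := card_le_card (subset_univ _)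
      _ = N := by simp
    have := card_inter_add_card_union L G
    omega
  obtain ⟨a, ha⟩ := inter1 _ _ hle hG
  obtain ⟨b, hb⟩ := inter1 _ _ hge hG
  simp only [mem_inter, mem_filter, mem_univ, true_and, not_not] at ha hb
  exact h (hI.out ha.2 hb.2 ⟨ha.1, hb.1⟩)


def tailF {ι : Type*} [DecidableEq ι] (s : Finset ι) (k : ℕ) (q : ι → ℝ) : ℝ :=
  ∑ S ∈ s.powerset.filter (fun S => k ≤ S.card), (∏ i ∈ S, q i) * ∏ i ∈ s \ S, (1 - q i)

lemma tailF_term_nonneg {ι : Type*} [DecidableEq ι] {s : Finset ι} {q : ι → ℝ}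
    (h0 : ∀ i ∈ s, 0 ≤ q i) (h1 : ∀ i ∈ s, q i ≤ 1) {S : Finset ι} (hS : S ⊆ s) :
    0 ≤ (∏ i ∈ S, q i) * ∏ i ∈ s \ S, (1 - q i) := by
  apply mul_nonneg
  · exact prod_nonneg fun i hi => h0 i (hS hi)
  · exact prod_nonneg fun i hi => by
      have := h1 i (sdiff_subset hi)
      linarith

lemma tailF_nonneg {ι : Type*} [DecidableEq ι] {s : Finset ι} {q : ι → ℝ} (k : ℕ)
    (h0 : ∀ i ∈ s, 0 ≤ q i) (h1 : ∀ i ∈ s, q i ≤ 1) : 0 ≤ tailF s k q := by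
  apply sum_nonneg
  intro S hS
  simp only [mem_filter, mem_powerset] at hS
  exact tailF_term_nonneg h0 h1 hS.1

lemma tailF_anti {ι : Type*} [DecidableEq ι] {s : Finset ι} {q : ι → ℝ} {k k' : ℕ}
    (hk : k ≤ k') (h0 : ∀ i ∈ s, 0 ≤ q i) (h1 : ∀ i ∈ s, q i ≤ 1) :
    tailF s k' q ≤ tailF s k q := by
  apply sum_le_sum_of_subset_of_nonneg
  · exact monotone_filter_right _ fun S _ h => hk.trans h
  · intro S hS _
    simp only [mem_filter, mem_powerset] at hS
    exact tailF_term_nonneg h0 h1 hS.1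

lemma tailF_insert {ι : Type*} [DecidableEq ι] {s : Finset ι} {a : ι} (ha : a ∉ s)
    (k : ℕ) (q : ι → ℝ) :
    tailF (insert a s) k q = q a * tailF s (k - 1) q + (1 - q a) * tailF s k q := by
  classical
  have h1 : tailF (insert a s) k q = ∑ S ∈ (insert a s).powerset,
      (if k ≤ S.card then (∏ i ∈ S, q i) * ∏ i ∈ (insert a s) \ S, (1 - q i) else 0) := by
    rw [tailF, sum_filter]
  have hA : ∑ T ∈ s.powerset,
      (if k ≤ T.card then (∏ i ∈ T, q i) * ∏ i ∈ (insert a s) \ T, (1 - q i) else 0)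
      = (1 - q a) * tailF s k q := by
    rw [tailF, sum_filter, mul_sum]
    apply sum_congr rfl
    intro T hT
    rw [mem_powerset] at hT
    have haT : a ∉ T := fun h => ha (hT h)
    have hsd : (insert a s) \ T = insert a (s \ T) := by
      ext x
      simp only [mem_sdiff, mem_insert]
      constructor
      · rintro ⟨(rfl | hx), hxT⟩
        · exact Or.inl rfl
        · exact Or.inr ⟨hx, hxT⟩
      · rintro (rfl | ⟨hx, hxT⟩)
        · exact ⟨Or.inl rfl, haT⟩
        · exact ⟨Or.inr hx, hxT⟩
    rw [mul_ite, mul_zero]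
    split_ifs with h
    · rw [hsd, prod_insert (by simp [ha])]
      ring
    · rfl
  have hB : ∑ T ∈ s.powerset,
      (if k ≤ (insert a T).card then
        (∏ i ∈ insert a T, q i) * ∏ i ∈ (insert a s) \ (insert a T), (1 - q i) else 0)
      = q a * tailF s (k - 1) q := by
    rw [tailF, sum_filter, mul_sum]
    apply sum_congr rfl
    intro T hT
    rw [mem_powerset] at hT
    have haT : a ∉ T := fun h => ha (hT h)
    have hsd : (insert a s) \ (insert a T) = s \ T := by
      ext x
      simp only [mem_sdiff, mem_insert]
      constructor
      · rintro ⟨(rfl | hx), hxT⟩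
        · exact absurd (Or.inl rfl) hxT
        · exact ⟨hx, fun hxx => hxT (Or.inr hxx)⟩
      · rintro ⟨hx, hxT⟩
        refine ⟨Or.inr hx, ?_⟩
        rintro (rfl | hxx)
        · exact ha hx
        · exact hxT hxx
    rw [card_insert_of_notMem haT]
    have hiff : k ≤ T.card + 1 ↔ k - 1 ≤ T.card := by omega
    simp only [hiff]
    rw [mul_ite, mul_zero]
    split_ifs with h
    · rw [hsd, prod_insert haT]
      ring
    · rfl
  rw [h1, sum_powerset_insert ha, hA, hB]
  ring

lemma tailF_mono {ι : Type*} [DecidableEq ι] {s : Finset ι} {q : ι → ℝ} {τ : ℝ}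
    (hτ0 : 0 ≤ τ) (hτ1 : τ ≤ 1) (h0 : ∀ i ∈ s, 0 ≤ q i) (h1 : ∀ i ∈ s, q i ≤ τ) (k : ℕ) :
    tailF s k q ≤ tailF s k (fun _ => τ) := by
  classical
  induction s using Finset.induction_on generalizing k with
  | empty =>
    apply le_of_eq
    apply sum_congr rfl
    intro S hS
    rw [mem_filter, powerset_empty, mem_singleton] at hS
    obtain ⟨h1, -⟩ := hS
    subst h1
    simp
  | insert _ _ ha =>
    rename_i a s ih
    have h0' : ∀ i ∈ s, 0 ≤ q i := fun i hi => h0 i (mem_insert_of_mem hi)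
    have h1' : ∀ i ∈ s, q i ≤ τ := fun i hi => h1 i (mem_insert_of_mem hi)
    have hqa0 : 0 ≤ q a := h0 a (mem_insert_self a s)
    have hqaτ : q a ≤ τ := h1 a (mem_insert_self a s)
    rw [tailF_insert ha, tailF_insert ha]
    have hF0 : 0 ≤ tailF s k (fun _ => τ) :=
      tailF_nonneg k (fun i _ => hτ0) (fun i _ => hτ1)
    have hF1 : 0 ≤ tailF s (k - 1) (fun _ => τ) :=
      tailF_nonneg _ (fun i _ => hτ0) (fun i _ => hτ1)
    have hanti : tailF s k (fun _ => τ) ≤ tailF s (k - 1) (fun _ => τ) :=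
      tailF_anti (by omega) (fun i _ => hτ0) (fun i _ => hτ1)
    have i1 := ih h0' h1' k
    have i2 := ih h0' h1' (k - 1)
    have t0 : 0 ≤ tailF s k q := tailF_nonneg k h0' fun i hi => (h1' i hi).trans hτ1
    nlinarith [mul_le_mul_of_nonneg_left i2 hqa0,
      mul_le_mul_of_nonneg_left i1 (by linarith : (0:ℝ) ≤ 1 - q a),
      mul_le_mul_of_nonneg_right (sub_nonneg.2 hqaτ) (sub_nonneg.2 hanti)]

-- counting lemma
lemma card_tail_subsets (N t : ℕ) (hN : N = 2 * t + 1) :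
    ((univ : Finset (Finset (Fin N))).filter (fun S => t + 1 ≤ S.card)).card = 2 ^ (N - 1) := by
  classical
  have hcompl := card_filter_add_card_filter_not
    (s := (univ : Finset (Finset (Fin N)))) (p := fun S => t + 1 ≤ S.card)
  have hbij : ((univ : Finset (Finset (Fin N))).filter (fun S => t + 1 ≤ S.card)).card
      = ((univ : Finset (Finset (Fin N))).filter (fun S => ¬ t + 1 ≤ S.card)).card := by
    apply card_bij (fun S _ => Sᶜ)
    · intro S hS
      simp only [mem_filter, mem_univ, true_and] at hS ⊢
      have h1 : Sᶜ.card = N - S.card := by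
        rw [card_compl, Fintype.card_fin]
      have h2 : S.card ≤ N := by
        simpa using card_le_card (subset_univ S)
      omega
    · intro S _ T _ h
      rw [← compl_compl S, h, compl_compl]
    · intro T hT
      simp only [mem_filter, mem_univ, true_and] at hT
      refine ⟨Tᶜ, ?_, by simp⟩
      simp only [mem_filter, mem_univ, true_and]
      have h1 : Tᶜ.card = N - T.card := by rw [card_compl, Fintype.card_fin]
      have h2 : T.card ≤ N := by simpa using card_le_card (subset_univ T)
      omega
  have htot : ((univ : Finset (Finset (Fin N)))).card = 2 ^ N := by
    simp [Finset.card_univ]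
  have hpow : 2 ^ N = 2 * 2 ^ (N - 1) := by
    rw [hN, Nat.add_sub_cancel, pow_succ]
    ring
  omega

lemma term_bound {τ : ℝ} (hτ0 : 0 < τ) (hτh : τ ≤ 1 - τ) {N t j : ℕ} (hN : N = 2 * t + 1)
    (hj1 : t + 1 ≤ j) (hj2 : j ≤ N) :
    τ ^ j * (1 - τ) ^ (N - j) ≤ (τ * (1 - τ)) ^ ((N : ℝ) / 2) := by
  have h1τ : 0 < 1 - τ := lt_of_lt_of_le hτ0 hτh
  set c : ℝ := (N : ℝ) / 2 with hc
  set x : ℝ := (j : ℝ) with hx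
  have hxc' : 0 ≤ x - c := by
    rw [hx, hc, hN]
    push_cast
    have : (t : ℝ) + 1 ≤ (j : ℝ) := by exact_mod_cast hj1
    linarith
  have hcast : τ ^ j * (1 - τ) ^ (N - j) = τ ^ x * (1 - τ) ^ ((N : ℝ) - x) := by
    rw [← Real.rpow_natCast τ j, ← Real.rpow_natCast (1 - τ) (N - j)]
    congr 1
    rw [hx]
    push_cast [Nat.cast_sub hj2]
    ring
  rw [hcast]
  have hN2 : (N : ℝ) = 2 * c := by rw [hc]; ring
  have e1 : τ ^ x = τ ^ c * τ ^ (x - c) := by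
    rw [← Real.rpow_add hτ0]
    congr 1
    ring
  have e2 : (1 - τ) ^ ((N : ℝ) - x) = (1 - τ) ^ c * (1 - τ) ^ (c - x) := by
    rw [← Real.rpow_add h1τ]
    congr 1
    rw [hN2]
    ring
  rw [e1, e2, Real.mul_rpow hτ0.le h1τ.le]
  have hr : τ ^ (x - c) * (1 - τ) ^ (c - x) = (τ / (1 - τ)) ^ (x - c) := by
    rw [Real.div_rpow hτ0.le h1τ.le, show c - x = -(x - c) by ring,
      Real.rpow_neg h1τ.le, div_eq_mul_inv]
  have hle1 : (τ / (1 - τ)) ^ (x - c) ≤ 1 :=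
    Real.rpow_le_one (div_nonneg hτ0.le h1τ.le) ((div_le_one h1τ).2 hτh) hxc'
  calc τ ^ c * τ ^ (x - c) * ((1 - τ) ^ c * (1 - τ) ^ (c - x))
      = (τ ^ c * (1 - τ) ^ c) * (τ ^ (x - c) * (1 - τ) ^ (c - x)) := by ring
    _ ≤ (τ ^ c * (1 - τ) ^ c) * 1 := by
        apply mul_le_mul_of_nonneg_left _
          (mul_nonneg (Real.rpow_nonneg hτ0.le c) (Real.rpow_nonneg h1τ.le c))
        rw [hr]
        exact hle1
    _ = τ ^ c * (1 - τ) ^ c := mul_one _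


open MeasureTheory

/-- the median trick for real random variables. -/
theorem stmt_1 {Ω : Type*} [MeasurableSpace Ω] (μ : MeasureTheory.Measure Ω)
    [MeasureTheory.IsProbabilityMeasure μ] (N : ℕ) (hN : Odd N)
    (X : Fin N → Ω → ℝ) (hXm : ∀ i, Measurable (X i))
    (hind : ProbabilityTheory.iIndepFun X μ)
    (I : Set ℝ) (hI : I.OrdConnected) (τ : ℝ) (hτ : τ < 1 / 2)
    (hb : ∀ i, μ {ω | X i ω ∉ I} ≤ ENNReal.ofReal τ) :
    μ {ω | medianR (fun i => X i ω) ∉ I} ≤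
      ENNReal.ofReal ((1 / 2) * (4 * τ * (1 - τ)) ^ ((N : ℝ) / 2)) := by
  classical
  obtain ⟨t, ht⟩ := hN
  have hImeas : MeasurableSet I := hI.measurableSet
  set A : Fin N → Set Ω := fun i => X i ⁻¹' Iᶜ with hAdef
  have hAmeas : ∀ i, MeasurableSet (A i) := fun i => (hXm i) hImeas.compl
  have hbA : ∀ i, μ (A i) ≤ ENNReal.ofReal τ := fun i => hb i
  by_cases hτ0 : τ ≤ 0
  · -- degenerate case : every bad event is null
    have hnull : ∀ i, μ (A i) = 0 := fun i =>
      le_antisymm (le_trans (hbA i) (by simp [ENNReal.ofReal_of_nonpos hτ0])) zero_le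
    have hsub : {ω | medianR (fun i => X i ω) ∉ I} ⊆ ⋃ i, A i := by
      intro ω hω
      have hcard := median_count ⟨t, ht⟩ (fun i => X i ω) hI hω
      obtain ⟨i, hi⟩ := card_pos.1 (lt_of_lt_of_le (by omega : 0 < (N + 1) / 2) hcard)
      rw [mem_filter] at hi
      exact Set.mem_iUnion.2 ⟨i, hi.2⟩
    have hz : μ {ω | medianR (fun i => X i ω) ∉ I} = 0 :=
      measure_mono_null hsub (measure_iUnion_null hnull)
    rw [hz]
    exact zero_le
  push_neg at hτ0
  have hτ1 : τ ≤ 1 := by linarith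
  have h1τ : 0 < 1 - τ := by linarith
  set q : Fin N → ℝ := fun i => (μ (A i)).toReal with hqdef
  have hq0 : ∀ i, 0 ≤ q i := fun i => ENNReal.toReal_nonneg
  have hqτ : ∀ i, q i ≤ τ := fun i => ENNReal.toReal_le_of_le_ofReal hτ0.le (hbA i)
  have hq1 : ∀ i, q i ≤ 1 := fun i => (hqτ i).trans hτ1
  set SS : Finset (Finset (Fin N)) :=
    (univ : Finset (Fin N)).powerset.filter (fun S => t + 1 ≤ S.card) with hSSdef
  set E : Finset (Fin N) → Set Ω := fun S => ⋂ i, (if i ∈ S then A i else (A i)ᶜ) with hEdef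
  -- inclusion into the union of patterns
  have hsub : {ω | medianR (fun i => X i ω) ∉ I} ⊆ ⋃ S ∈ SS, E S := by
    intro ω hω
    have hcard := median_count ⟨t, ht⟩ (fun i => X i ω) hI hω
    set S₀ : Finset (Fin N) := univ.filter (fun i => X i ω ∉ I) with hS₀
    refine Set.mem_iUnion₂.2 ⟨S₀, ?_, ?_⟩
    · rw [hSSdef, mem_filter]
      exact ⟨mem_powerset.2 (subset_univ _), by omega⟩
    · rw [hEdef]
      rw [Set.mem_iInter]
      intro i
      by_cases hi : i ∈ S₀
      · rw [if_pos hi]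
        exact (mem_filter.1 hi).2
      · rw [if_neg hi]
        intro hcon
        exact hi (mem_filter.2 ⟨mem_univ _, hcon⟩)
  -- measure of each pattern
  have hES : ∀ S : Finset (Fin N),
      μ (E S) = ENNReal.ofReal ((∏ i ∈ S, q i) * ∏ i ∈ univ \ S, (1 - q i)) := by
    intro S
    have hmeas : ∀ i, MeasurableSet[(inferInstance : MeasurableSpace ℝ).comap (X i)]
        (if i ∈ S then A i else (A i)ᶜ) := by
      intro i
      by_cases hi : i ∈ S
      · rw [if_pos hi]
        exact ⟨Iᶜ, hImeas.compl, rfl⟩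
      · rw [if_neg hi]
        refine ⟨I, hImeas, ?_⟩
        rw [hAdef]
        simp
    have hmi := hind.meas_iInter hmeas
    rw [hEdef]
    rw [hmi]
    have hfac : ∀ i : Fin N, μ (if i ∈ S then A i else (A i)ᶜ)
        = ENNReal.ofReal (if i ∈ S then q i else 1 - q i) := by
      intro i
      by_cases hi : i ∈ S
      · rw [if_pos hi, if_pos hi, ENNReal.ofReal_toReal (measure_ne_top μ _)]
      · rw [if_neg hi, if_neg hi, measure_compl (hAmeas i) (measure_ne_top μ _), measure_univ]
        rw [ENNReal.ofReal_sub _ ENNReal.toReal_nonneg, ENNReal.ofReal_one,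
          ENNReal.ofReal_toReal (measure_ne_top μ _)]
    calc ∏ i, μ (if i ∈ S then A i else (A i)ᶜ)
        = ∏ i, ENNReal.ofReal (if i ∈ S then q i else 1 - q i) := by
          exact prod_congr rfl fun i _ => hfac i
      _ = ENNReal.ofReal (∏ i, (if i ∈ S then q i else 1 - q i)) := by
          rw [ENNReal.ofReal_prod_of_nonneg]
          intro i _
          by_cases hi : i ∈ S
          · rw [if_pos hi]; exact hq0 i
          · rw [if_neg hi]; have := hq1 i; linarith
      _ = ENNReal.ofReal ((∏ i ∈ S, q i) * ∏ i ∈ univ \ S, (1 - q i)) := by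
          congr 1
          rw [← prod_filter_mul_prod_filter_not univ (fun i => i ∈ S)]
          congr 1
          · rw [prod_congr rfl (fun i hi => if_pos (mem_filter.1 hi).2)]
            congr 1
            ext x
            simp
          · rw [prod_congr rfl (fun i hi => if_neg (mem_filter.1 hi).2)]
            congr 1
            ext x
            simp
  -- put everything together
  have hchain : μ {ω | medianR (fun i => X i ω) ∉ I} ≤ ENNReal.ofReal (tailF univ (t + 1) q) := by
    calc μ {ω | medianR (fun i => X i ω) ∉ I} ≤ μ (⋃ S ∈ SS, E S) := measure_mono hsub
      _ ≤ ∑ S ∈ SS, μ (E S) := measure_biUnion_finset_le _ _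
      _ = ∑ S ∈ SS, ENNReal.ofReal ((∏ i ∈ S, q i) * ∏ i ∈ univ \ S, (1 - q i)) :=
          sum_congr rfl fun S _ => hES S
      _ = ENNReal.ofReal (∑ S ∈ SS, (∏ i ∈ S, q i) * ∏ i ∈ univ \ S, (1 - q i)) := by
          rw [ENNReal.ofReal_sum_of_nonneg]
          intro S hS
          rw [hSSdef, mem_filter, mem_powerset] at hS
          exact tailF_term_nonneg (fun i _ => hq0 i) (fun i _ => hq1 i) hS.1
      _ = ENNReal.ofReal (tailF univ (t + 1) q) := rfl
  refine hchain.trans (ENNReal.ofReal_le_ofReal ?_)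
  have hτh : τ ≤ 1 - τ := by linarith
  have hz0 : 0 ≤ (τ * (1 - τ)) ^ ((N : ℝ) / 2) :=
    Real.rpow_nonneg (mul_nonneg hτ0.le h1τ.le) _
  have step1 : tailF univ (t + 1) q ≤ tailF (univ : Finset (Fin N)) (t + 1) (fun _ => τ) :=
    tailF_mono hτ0.le hτ1 (fun i _ => hq0 i) (fun i _ => hqτ i) _
  have step2 : tailF (univ : Finset (Fin N)) (t + 1) (fun _ => τ) ≤ 2 ^ (N - 1) * (τ * (1 - τ)) ^ ((N : ℝ) / 2) := by
    unfold tailF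
    have hterm : ∀ S ∈ (univ : Finset (Fin N)).powerset.filter (fun S => t + 1 ≤ S.card),
        (∏ i ∈ S, (fun _ => τ) i) * ∏ i ∈ univ \ S, (1 - (fun _ => τ) i)
          ≤ (τ * (1 - τ)) ^ ((N : ℝ) / 2) := by
      intro S hS
      rw [mem_filter, mem_powerset] at hS
      have hcS : S.card ≤ N := by
        simpa using card_le_card (subset_univ S)
      rw [prod_const, prod_const, card_sdiff_of_subset (subset_univ S), card_univ, Fintype.card_fin]
      exact term_bound hτ0 hτh ht hS.2 hcS
    calc ∑ S ∈ (univ : Finset (Fin N)).powerset.filter (fun S => t + 1 ≤ S.card),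
          (∏ i ∈ S, (fun _ => τ) i) * ∏ i ∈ univ \ S, (1 - (fun _ => τ) i)
        ≤ ∑ S ∈ (univ : Finset (Fin N)).powerset.filter (fun S => t + 1 ≤ S.card),
          (τ * (1 - τ)) ^ ((N : ℝ) / 2) := sum_le_sum hterm
      _ = ((univ : Finset (Fin N)).powerset.filter (fun S => t + 1 ≤ S.card)).card
            • ((τ * (1 - τ)) ^ ((N : ℝ) / 2)) := by rw [sum_const]
      _ = 2 ^ (N - 1) * (τ * (1 - τ)) ^ ((N : ℝ) / 2) := by
          rw [powerset_univ, card_tail_subsets N t ht, nsmul_eq_mul]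
          push_cast
          ring
  refine (step1.trans step2).trans ?_
  -- final algebra
  have h4 : 4 * τ * (1 - τ) = 4 * (τ * (1 - τ)) := by ring
  rw [h4, Real.mul_rpow (by norm_num) (mul_nonneg hτ0.le h1τ.le)]
  have h4' : (4 : ℝ) ^ ((N : ℝ) / 2) = 2 ^ (N : ℕ) := by
    rw [show (4 : ℝ) = 2 ^ (2 : ℝ) by
        rw [show (2:ℝ) = ((2:ℕ):ℝ) by norm_num, Real.rpow_natCast]
        norm_num,
      ← Real.rpow_natCast (2 : ℝ) N, ← Real.rpow_mul (by norm_num)]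
    congr 1
    ring
  rw [h4']
  have h2N : (2 : ℝ) ^ (N : ℕ) = 2 * 2 ^ (N - 1) := by
    rw [show N = (N - 1) + 1 by omega, pow_succ]
    simp
    ring
  rw [h2N]
  ring_nf
  rfl


end
end

section
/- Let d ∈ ℕ, α > 1/2, let γ = (γ_u) be weights with 0 < γ_u ≤ 1, and let λ ∈ [1/2, α). Then ( Σ_{∅≠u⊆{1,…,d}} γ_u² (2ζ(2α))^{|u|} )^{1/2} ≤ ( Σ_{∅≠u⊆{1,…,d}} γ_u^{1/λ} (2ζ(α/λ))^{|u|} )^{λ} = V_d(α/λ, γ^{1/λ})^{λ}. -/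
open scoped BigOperators Classical

noncomputable section

lemma zsummable {β : ℝ} (hβ : 1 < β) : Summable (fun k : ℕ => ((k : ℝ) + 1) ^ (-β)) := by
  have : Summable (fun k : ℕ => ((k : ℝ)) ^ (-β)) := by
    rw [Real.summable_nat_rpow]; linarith
  have h2 := (summable_nat_add_iff 1).2 this
  refine h2.congr fun k => ?_
  push_cast
  ring_nf

lemma one_le_zetaR {β : ℝ} (hβ : 1 < β) : 1 ≤ zetaR β := by
  have h0 : ((0 : ℕ) + 1 : ℝ) ^ (-β) = 1 := by norm_num
  have := Summable.le_tsum (zsummable hβ) 0 (fun k _ => Real.rpow_nonneg (by positivity) _)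
  rw [h0] at this
  exact this

lemma zetaR_anti {β₁ β₂ : ℝ} (h1 : 1 < β₁) (hle : β₁ ≤ β₂) : zetaR β₂ ≤ zetaR β₁ := by
  refine Summable.tsum_le_tsum (fun k => ?_) (zsummable (lt_of_lt_of_le h1 hle)) (zsummable h1)
  apply Real.rpow_le_rpow_of_exponent_le
  · have : (0:ℝ) ≤ (k:ℝ) := Nat.cast_nonneg k
    linarith
  · linarith

lemma sum_rpow_le_rpow_sum {ι : Type*} (s : Finset ι) (f : ι → ℝ) (hf : ∀ i ∈ s, 0 ≤ f i)
    {p : ℝ} (hp : 1 ≤ p) : ∑ i ∈ s, f i ^ p ≤ (∑ i ∈ s, f i) ^ p := by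
  set S := ∑ i ∈ s, f i with hS
  have hS0 : 0 ≤ S := Finset.sum_nonneg hf
  calc ∑ i ∈ s, f i ^ p ≤ ∑ i ∈ s, f i * S ^ (p - 1) := by
        refine Finset.sum_le_sum fun i hi => ?_
        have hfi : 0 ≤ f i := hf i hi
        have hle : f i ≤ S := Finset.single_le_sum hf hi
        calc f i ^ p = f i ^ (1 : ℝ) * f i ^ (p - 1) := by
              rw [← Real.rpow_add' hfi]; ring_nf; linarith
          _ ≤ f i * S ^ (p - 1) := by
              rw [Real.rpow_one]
              exact mul_le_mul_of_nonneg_left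
                (Real.rpow_le_rpow hfi hle (by linarith)) hfi
    _ = S * S ^ (p - 1) := by rw [← Finset.sum_mul]
    _ = S ^ p := by
        rw [← Real.rpow_one_add' hS0]; ring_nf; linarith

/-- the Cauchy–Schwarz constant is bounded by `V_d(α/λ, γ^{1/λ})^λ`. -/
theorem stmt_11 (d : ℕ) (α : ℝ) (hα : 1 / 2 < α) (γ : Finset (Fin d) → ℝ)
    (hγ : ∀ u : Finset (Fin d), u.Nonempty → 0 < γ u ∧ γ u ≤ 1)
    (lam : ℝ) (hlam : lam ∈ Set.Ico (1 / 2 : ℝ) α) :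
    Real.sqrt (∑ u ∈ Finset.univ.filter (fun u : Finset (Fin d) => u.Nonempty),
        γ u ^ 2 * (2 * zetaR (2 * α)) ^ u.card) ≤
      (Vd d (α / lam) (fun u => γ u ^ (1 / lam))) ^ lam := by
  obtain ⟨hl1, hl2⟩ := hlam
  have hlam0 : 0 < lam := by linarith
  have h2a : 1 < 2 * α := by linarith
  have hal : 1 < α / lam := by
    rw [lt_div_iff₀ hlam0]; linarith
  have hle : α / lam ≤ 2 * α := by
    rw [div_le_iff₀ hlam0]; nlinarith
  have hz1 : 1 ≤ zetaR (2 * α) := one_le_zetaR h2a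
  have hz2 : zetaR (2 * α) ≤ zetaR (α / lam) := zetaR_anti hal hle
  have hz3 : 1 ≤ zetaR (α / lam) := le_trans hz1 hz2
  set c1 := 2 * zetaR (2 * α) with hc1
  set c2 := 2 * zetaR (α / lam) with hc2
  have hc10 : 1 ≤ c1 := by linarith
  have hc20 : 1 ≤ c2 := by linarith
  have hp : (1:ℝ) ≤ 2 * lam := by linarith
  set T := Finset.univ.filter (fun u : Finset (Fin d) => u.Nonempty) with hT
  set s : Finset (Fin d) → ℝ := fun u => γ u ^ (1 / lam) * c2 ^ u.card with hs
  have hsnn : ∀ u ∈ T, 0 ≤ s u := by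
    intro u hu
    have := (hγ u (Finset.mem_filter.1 hu).2).1
    positivity
  have hterm : ∀ u ∈ T, γ u ^ 2 * c1 ^ u.card ≤ (s u) ^ (2 * lam) := by
    intro u hu
    have hγu := hγ u (Finset.mem_filter.1 hu).2
    have hg0 : 0 < γ u := hγu.1
    have h1 : γ u ^ 2 = (γ u ^ (1 / lam)) ^ (2 * lam) := by
      rw [← Real.rpow_natCast (γ u) 2, ← Real.rpow_mul hg0.le]
      congr 1
      field_simp
      norm_num
    have h2 : (c1 : ℝ) ^ u.card ≤ (c2 ^ u.card) ^ (2 * lam) := by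
      rw [← Real.rpow_natCast c2 u.card, ← Real.rpow_mul (by linarith),
        ← Real.rpow_natCast c1 u.card]
      calc c1 ^ (u.card : ℝ) ≤ c2 ^ (u.card : ℝ) :=
            Real.rpow_le_rpow (by linarith) (by linarith) (Nat.cast_nonneg _)
        _ ≤ c2 ^ ((u.card : ℝ) * (2 * lam)) := by
            apply Real.rpow_le_rpow_of_exponent_le hc20
            nlinarith [Nat.cast_nonneg (α := ℝ) u.card]
    have h3 : (s u) ^ (2 * lam) = (γ u ^ (1 / lam)) ^ (2 * lam) * (c2 ^ u.card) ^ (2 * lam) := by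
      rw [hs]
      exact Real.mul_rpow (by positivity) (by positivity)
    rw [h3, h1]
    apply mul_le_mul_of_nonneg_left h2 (by positivity)
  have hsum : ∑ u ∈ T, γ u ^ 2 * c1 ^ u.card ≤ (∑ u ∈ T, s u) ^ (2 * lam) := by
    calc ∑ u ∈ T, γ u ^ 2 * c1 ^ u.card ≤ ∑ u ∈ T, (s u) ^ (2 * lam) :=
          Finset.sum_le_sum hterm
      _ ≤ (∑ u ∈ T, s u) ^ (2 * lam) := sum_rpow_le_rpow_sum T s hsnn hp
  have hV : Vd d (α / lam) (fun u => γ u ^ (1 / lam)) = ∑ u ∈ T, s u := rfl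
  rw [hV]
  have hSnn : 0 ≤ ∑ u ∈ T, s u := Finset.sum_nonneg hsnn
  calc Real.sqrt (∑ u ∈ T, γ u ^ 2 * c1 ^ u.card)
      ≤ Real.sqrt ((∑ u ∈ T, s u) ^ (2 * lam)) := Real.sqrt_le_sqrt hsum
    _ = (∑ u ∈ T, s u) ^ lam := by
        rw [Real.sqrt_eq_rpow, ← Real.rpow_mul hSnn]
        congr 1
        ring

end
end

section
/- Let N be an odd natural number and let a_1,…,a_N be complex numbers. Then |median_ℂ{a_1,…,a_N}| ≤ √2 · median{|a_1|,…,|a_N|}. -/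
open scoped BigOperators Classical

noncomputable section

lemma countP_and_aux {α : Type*} (p q : α → Bool) (l : List α) :
    l.countP p + l.countP q ≤ l.length + l.countP (fun x => p x && q x) := by
  induction l with
  | nil => simp
  | cons a l ih =>
    simp only [List.countP_cons, List.length_cons]
    cases hp : p a <;> cases hq : q a <;> simp <;> omega

lemma exists_both {α : Type*} (p q : α → Bool) (l : List α)
    (h : l.length < l.countP p + l.countP q) : ∃ x ∈ l, p x ∧ q x := by
  have := countP_and_aux p q l
  have hpos : 0 < l.countP (fun x => p x && q x) := by omega
  obtain ⟨x, hx, hx2⟩ := List.countP_pos_iff.mp hpos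
  exact ⟨x, hx, by simpa using hx2⟩

lemma count_le_sorted (s : List ℝ) (hs : s.Pairwise (· ≤ ·)) (i : ℕ) (hi : i < s.length)
    (c : ℝ) (hc : s[i] ≤ c) :
    i + 1 ≤ s.countP (fun x => decide (x ≤ c)) := by
  have hdecomp : s = s.take (i+1) ++ s.drop (i+1) := (List.take_append_drop _ _).symm
  have hall : ∀ x ∈ s.take (i+1), x ≤ c := by
    intro x hx
    obtain ⟨j, hj, rfl⟩ := List.getElem_of_mem hx
    rw [List.length_take] at hj
    rw [List.getElem_take]
    refine le_trans ?_ hc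
    exact hs.rel_get_of_le (a := ⟨j, by omega⟩) (b := ⟨i, hi⟩) (by simp only [Fin.mk_le_mk]; omega)
  have h1 : (s.take (i+1)).countP (fun x => decide (x ≤ c)) = (s.take (i+1)).length :=
    List.countP_eq_length.mpr (fun a ha => by simpa using hall a ha)
  calc i + 1 = (s.take (i+1)).length := by rw [List.length_take]; omega
    _ = (s.take (i+1)).countP (fun x => decide (x ≤ c)) := h1.symm
    _ ≤ s.countP (fun x => decide (x ≤ c)) := by
        conv_rhs => rw [hdecomp]
        rw [List.countP_append]; omega

lemma count_ge_sorted (s : List ℝ) (hs : s.Pairwise (· ≤ ·)) (i : ℕ) (hi : i < s.length)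
    (c : ℝ) (hc : c ≤ s[i]) :
    s.length - i ≤ s.countP (fun x => decide (c ≤ x)) := by
  have hdecomp : s = s.take i ++ s.drop i := (List.take_append_drop _ _).symm
  have hall : ∀ x ∈ s.drop i, c ≤ x := by
    intro x hx
    obtain ⟨j, hj, rfl⟩ := List.getElem_of_mem hx
    rw [List.length_drop] at hj
    rw [List.getElem_drop]
    refine le_trans hc ?_
    exact hs.rel_get_of_le (a := ⟨i, hi⟩) (b := ⟨i + j, by omega⟩) (by simp)
  have h1 : (s.drop i).countP (fun x => decide (c ≤ x)) = (s.drop i).length :=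
    List.countP_eq_length.mpr (fun a ha => by simpa using hall a ha)
  calc s.length - i = (s.drop i).length := by rw [List.length_drop]
    _ = (s.drop i).countP _ := h1.symm
    _ ≤ s.countP (fun x => decide (c ≤ x)) := by
        conv_rhs => rw [hdecomp]
        rw [List.countP_append]; omega

lemma medianR_eq {N : ℕ} (f : Fin N → ℝ)
    (h : (N - 1) / 2 < (List.insertionSort (· ≤ ·) (List.ofFn f)).length) :
    medianR f = (List.insertionSort (· ≤ ·) (List.ofFn f))[(N - 1) / 2] :=
  List.getD_eq_getElem _ _ h

lemma median_mono {N : ℕ} (hN : 0 < N) {f g : Fin N → ℝ} (hfg : ∀ k, f k ≤ g k) :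
    medianR f ≤ medianR g := by
  set i := (N - 1) / 2 with hidef
  set s := List.insertionSort (· ≤ ·) (List.ofFn f) with hsdef
  set t := List.insertionSort (· ≤ ·) (List.ofFn g) with htdef
  have hsl : s.length = N := by
    rw [hsdef, List.length_insertionSort, List.length_ofFn]
  have htl : t.length = N := by
    rw [htdef, List.length_insertionSort, List.length_ofFn]
  have his : i < s.length := by omega
  have hit : i < t.length := by omega
  rw [medianR_eq f his, medianR_eq g hit]
  set sv := s[i] with hsv
  set tv := t[i] with htv
  set l := List.ofFn (fun k => (f k, g k)) with hldef
  have hmapf : l.map Prod.fst = List.ofFn f := by rw [hldef, List.map_ofFn]; rfl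
  have hmapg : l.map Prod.snd = List.ofFn g := by rw [hldef, List.map_ofFn]; rfl
  have c1 : N - i ≤ l.countP (fun x => decide (sv ≤ x.1)) := by
    have := count_ge_sorted s (List.pairwise_insertionSort _ _) i his sv le_rfl
    rw [hsl] at this
    refine this.trans (le_of_eq ?_)
    rw [(List.perm_insertionSort (· ≤ ·) (List.ofFn f)).countP_eq, ← hmapf, List.countP_map]
    rfl
  have c2 : i + 1 ≤ l.countP (fun x => decide (x.2 ≤ tv)) := by
    have := count_le_sorted t (List.pairwise_insertionSort _ _) i hit tv le_rfl
    refine this.trans (le_of_eq ?_)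
    rw [(List.perm_insertionSort (· ≤ ·) (List.ofFn g)).countP_eq, ← hmapg, List.countP_map]
    rfl
  have hlen : l.length = N := List.length_ofFn
  obtain ⟨x, hxl, hx1, hx2⟩ := exists_both (fun x => decide (sv ≤ x.1))
    (fun x => decide (x.2 ≤ tv)) l (by omega)
  obtain ⟨k, rfl⟩ := List.mem_ofFn.mp hxl
  simp only [decide_eq_true_eq] at hx1 hx2
  exact le_trans hx1 (le_trans (hfg k) hx2)

lemma median_neg_le {N : ℕ} (hN : Odd N) {f g : Fin N → ℝ} (hfg : ∀ k, -g k ≤ f k) :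
    -medianR g ≤ medianR f := by
  have hN0 : 0 < N := hN.pos
  set i := (N - 1) / 2 with hidef
  have hNi : N = 2 * i + 1 := by
    obtain ⟨m, rfl⟩ := hN; omega
  set s := List.insertionSort (· ≤ ·) (List.ofFn f) with hsdef
  set t := List.insertionSort (· ≤ ·) (List.ofFn g) with htdef
  have hsl : s.length = N := by
    rw [hsdef, List.length_insertionSort, List.length_ofFn]
  have htl : t.length = N := by
    rw [htdef, List.length_insertionSort, List.length_ofFn]
  have his : i < s.length := by omega
  have hit : i < t.length := by omega
  rw [medianR_eq f his, medianR_eq g hit]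
  set sv := s[i] with hsv
  set tv := t[i] with htv
  set l := List.ofFn (fun k => (f k, g k)) with hldef
  have hmapf : l.map Prod.fst = List.ofFn f := by rw [hldef, List.map_ofFn]; rfl
  have hmapg : l.map Prod.snd = List.ofFn g := by rw [hldef, List.map_ofFn]; rfl
  have c1 : i + 1 ≤ l.countP (fun x => decide (x.1 ≤ sv)) := by
    have := count_le_sorted s (List.pairwise_insertionSort _ _) i his sv le_rfl
    refine this.trans (le_of_eq ?_)
    rw [(List.perm_insertionSort (· ≤ ·) (List.ofFn f)).countP_eq, ← hmapf, List.countP_map]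
    rfl
  have c2 : i + 1 ≤ l.countP (fun x => decide (x.2 ≤ tv)) := by
    have := count_le_sorted t (List.pairwise_insertionSort _ _) i hit tv le_rfl
    refine this.trans (le_of_eq ?_)
    rw [(List.perm_insertionSort (· ≤ ·) (List.ofFn g)).countP_eq, ← hmapg, List.countP_map]
    rfl
  have hlen : l.length = N := List.length_ofFn
  obtain ⟨x, hxl, hx1, hx2⟩ := exists_both (fun x => decide (x.1 ≤ sv))
    (fun x => decide (x.2 ≤ tv)) l (by omega)
  obtain ⟨k, rfl⟩ := List.mem_ofFn.mp hxl
  simp only [decide_eq_true_eq] at hx1 hx2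
  have : -tv ≤ f k := le_trans (neg_le_neg hx2) (hfg k)
  linarith

/-- complex version of the median inequality, with a factor `√2`. -/
theorem stmt_13 (N : ℕ) (hN : Odd N) (a : Fin N → ℂ) :
    ‖medianC a‖ ≤ Real.sqrt 2 * medianR (fun k => ‖a k‖) := by
  have hN0 : 0 < N := hN.pos
  set mre := medianR (fun k => (a k).re) with hmre
  set mim := medianR (fun k => (a k).im) with hmim
  set M := medianR (fun k => ‖a k‖) with hM
  have h1 : mre ≤ M := median_mono hN0 (fun k => by
    exact Complex.re_le_norm (a k))
  have h2 : -M ≤ mre := median_neg_le hN (fun k => by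
    exact (abs_le.mp (Complex.abs_re_le_norm (a k))).1)
  have h3 : mim ≤ M := median_mono hN0 (fun k => by
    exact (abs_le.mp (Complex.abs_im_le_norm (a k))).2)
  have h4 : -M ≤ mim := median_neg_le hN (fun k => by
    exact (abs_le.mp (Complex.abs_im_le_norm (a k))).1)
  have hM0 : 0 ≤ M := by linarith
  have hre : (medianC a).re = mre := by simp [medianC, hmre]
  have him : (medianC a).im = mim := by simp [medianC, hmim]
  calc ‖medianC a‖ = Real.sqrt (mre ^ 2 + mim ^ 2) := by
        rw [Complex.norm_def, Complex.normSq_apply, hre, him]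
        congr 1; ring
    _ ≤ Real.sqrt (2 * M ^ 2) := Real.sqrt_le_sqrt (by nlinarith)
    _ = Real.sqrt 2 * M := by
        rw [Real.sqrt_mul (by norm_num), Real.sqrt_sq hM0]


end
end

section
/- Let N be an odd natural number, let X_1,…,X_N be independent complex-valued random variables, let c ∈ ℂ and R ≥ 0, and suppose P(|X_i − c| > R) ≤ 1/8 for every i. Then P(|median_ℂ{X_1,…,X_N} − c| > √2·R) ≤ 2^{−N/2}. -/
open scoped BigOperators Classical

noncomputable section

open scoped ENNReal

lemma aux_countP_ofFn_eq {N : ℕ} (f : Fin N → ℝ) (p : ℝ → Bool) :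
    (List.ofFn f).countP p = (Finset.univ.filter fun i => p (f i)).card := by
  rw [List.ofFn_eq_map, List.countP_map, List.countP_eq_length_filter,
    ← List.toFinset_card_of_nodup (List.Nodup.filter _ (List.nodup_finRange N))]
  congr 1; ext i; simp [List.mem_filter, List.mem_finRange]

lemma aux_median_count_gt {N : ℕ} (hN : Odd N) (f : Fin N → ℝ) {t : ℝ} (h : t < medianR f) :
    (N + 1) / 2 ≤ (Finset.univ.filter fun i => t < f i).card := by
  have hN0 : 0 < N := hN.pos
  set l := List.insertionSort (· ≤ ·) (List.ofFn f) with hl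
  have hlen : l.length = N := by simp [hl]
  have hsort : l.Pairwise (· ≤ ·) := List.pairwise_insertionSort _ _
  set k := (N - 1) / 2 with hk
  have hkN : k < l.length := by omega
  have hmed : medianR f = l[k]'hkN := by rw [medianR, List.getD_eq_getElem]
  have hdrop : ∀ x ∈ l.drop k, t < x := by
    intro x hx
    obtain ⟨i, hi, rfl⟩ := List.mem_iff_getElem.mp hx
    have hki : k + i < l.length := by rw [List.length_drop] at hi; omega
    have heq : (l.drop k)[i] = l[k+i]'hki := List.getElem_drop
    rw [heq]
    have hle : l[k]'hkN ≤ l[k+i]'hki := by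
      have := hsort.rel_get_of_le (a := ⟨k, hkN⟩) (b := ⟨k+i, hki⟩)
        (Fin.mk_le_mk.mpr (Nat.le_add_right _ _))
      simpa [List.get_eq_getElem] using this
    exact lt_of_lt_of_le (hmed ▸ h) hle
  have h1 : (l.drop k).countP (fun x => decide (t < x)) = (l.drop k).length :=
    List.countP_eq_length.mpr (fun x hx => by simpa using hdrop x hx)
  have h2 : (l.drop k).countP (fun x => decide (t < x)) ≤ l.countP (fun x => decide (t < x)) :=
    (List.drop_sublist k l).countP_le
  have h3 : l.countP (fun x => decide (t < x)) = (List.ofFn f).countP (fun x => decide (t < x)) :=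
    (List.perm_insertionSort _ _).countP_eq _
  have h4 := aux_countP_ofFn_eq f (fun x => decide (t < x))
  have hlen2 : (l.drop k).length = N - k := by simp [hlen]
  have : (N + 1) / 2 ≤ l.countP (fun x => decide (t < x)) := by omega
  rw [h3, h4] at this
  simpa using this

lemma aux_median_count_lt {N : ℕ} (hN : Odd N) (f : Fin N → ℝ) {t : ℝ} (h : medianR f < t) :
    (N + 1) / 2 ≤ (Finset.univ.filter fun i => f i < t).card := by
  have hN0 : 0 < N := hN.pos
  set l := List.insertionSort (· ≤ ·) (List.ofFn f) with hl
  have hlen : l.length = N := by simp [hl]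
  have hsort : l.Pairwise (· ≤ ·) := List.pairwise_insertionSort _ _
  set k := (N - 1) / 2 with hk
  have hkN : k < l.length := by omega
  have hmed : medianR f = l[k]'hkN := by rw [medianR, List.getD_eq_getElem]
  have htake : ∀ x ∈ l.take (k + 1), x < t := by
    intro x hx
    obtain ⟨i, hi, rfl⟩ := List.mem_iff_getElem.mp hx
    have hiN : i < l.length := by rw [List.length_take] at hi; omega
    have hik : i ≤ k := by rw [List.length_take] at hi; omega
    have heq : (l.take (k+1))[i] = l[i]'hiN := List.getElem_take
    rw [heq]
    have hle : l[i]'hiN ≤ l[k]'hkN := by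
      have := hsort.rel_get_of_le (a := ⟨i, hiN⟩) (b := ⟨k, hkN⟩) (Fin.mk_le_mk.mpr hik)
      simpa [List.get_eq_getElem] using this
    exact lt_of_le_of_lt hle (hmed ▸ h)
  have h1 : (l.take (k+1)).countP (fun x => decide (x < t)) = (l.take (k+1)).length :=
    List.countP_eq_length.mpr (fun x hx => by simpa using htake x hx)
  have h2 : (l.take (k+1)).countP (fun x => decide (x < t)) ≤ l.countP (fun x => decide (x < t)) :=
    (List.take_sublist _ l).countP_le
  have h3 : l.countP (fun x => decide (x < t)) = (List.ofFn f).countP (fun x => decide (x < t)) :=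
    (List.perm_insertionSort _ _).countP_eq _
  have h4 := aux_countP_ofFn_eq f (fun x => decide (x < t))
  have hlen2 : (l.take (k+1)).length = min (k+1) N := by simp [hlen]
  have : (N + 1) / 2 ≤ l.countP (fun x => decide (x < t)) := by omega
  rw [h3, h4] at this
  simpa using this

lemma aux_median_re_count {N : ℕ} (hN : Odd N) (w : Fin N → ℂ) (a : ℂ) {R : ℝ}
    (h : R < |medianR (fun i => (w i).re) - a.re|) :
    (N + 1) / 2 ≤ (Finset.univ.filter fun i => R < ‖w i - a‖).card := by
  rcases lt_abs.mp h with h' | h'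
  · have hgt := aux_median_count_gt hN (fun i => (w i).re) (t := a.re + R) (by linarith)
    refine le_trans hgt (Finset.card_le_card ?_)
    intro i hi
    simp only [Finset.mem_filter, Finset.mem_univ, true_and] at hi ⊢
    calc R < (w i - a).re := by simp [Complex.sub_re]; linarith
      _ ≤ |(w i - a).re| := le_abs_self _
      _ ≤ ‖w i - a‖ := by exact Complex.abs_re_le_norm _
  · have hlt := aux_median_count_lt hN (fun i => (w i).re) (t := a.re - R) (by linarith)
    refine le_trans hlt (Finset.card_le_card ?_)
    intro i hi
    simp only [Finset.mem_filter, Finset.mem_univ, true_and] at hi ⊢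
    calc R < -((w i - a).re) := by simp [Complex.sub_re]; linarith
      _ ≤ |(w i - a).re| := neg_le_abs _
      _ ≤ ‖w i - a‖ := by exact Complex.abs_re_le_norm _

lemma aux_median_im_count {N : ℕ} (hN : Odd N) (w : Fin N → ℂ) (a : ℂ) {R : ℝ}
    (h : R < |medianR (fun i => (w i).im) - a.im|) :
    (N + 1) / 2 ≤ (Finset.univ.filter fun i => R < ‖w i - a‖).card := by
  rcases lt_abs.mp h with h' | h'
  · have hgt := aux_median_count_gt hN (fun i => (w i).im) (t := a.im + R) (by linarith)
    refine le_trans hgt (Finset.card_le_card ?_)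
    intro i hi
    simp only [Finset.mem_filter, Finset.mem_univ, true_and] at hi ⊢
    calc R < (w i - a).im := by simp [Complex.sub_im]; linarith
      _ ≤ |(w i - a).im| := le_abs_self _
      _ ≤ ‖w i - a‖ := by exact Complex.abs_im_le_norm _
  · have hlt := aux_median_count_lt hN (fun i => (w i).im) (t := a.im - R) (by linarith)
    refine le_trans hlt (Finset.card_le_card ?_)
    intro i hi
    simp only [Finset.mem_filter, Finset.mem_univ, true_and] at hi ⊢
    calc R < -((w i - a).im) := by simp [Complex.sub_im]; linarith
      _ ≤ |(w i - a).im| := neg_le_abs _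
      _ ≤ ‖w i - a‖ := by exact Complex.abs_im_le_norm _

lemma aux_choose_le_two_pow (N m : ℕ) (hm : m ≤ N) : N.choose m ≤ 2 ^ N := by
  calc N.choose m ≤ ∑ k ∈ Finset.range (N+1), N.choose k :=
        Finset.single_le_sum (fun k _ => Nat.zero_le _) (Finset.mem_range.mpr (by omega))
    _ = 2 ^ N := Nat.sum_range_choose N

lemma aux_real_bound (N m : ℕ) (hm : 2 * m = N + 1) :
    (N.choose m : ℝ) * (1/8)^m ≤ (2:ℝ) ^ (-(N:ℝ)/2) := by
  have hmN : m ≤ N := by omega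
  have h1 : (N.choose m : ℝ) ≤ 2 ^ N := by exact_mod_cast aux_choose_le_two_pow N m hmN
  have h8 : ((1:ℝ)/8) = (2:ℝ) ^ (-3:ℝ) := by
    rw [Real.rpow_neg (by norm_num), show (3:ℝ) = ((3:ℕ):ℝ) by norm_num, Real.rpow_natCast]
    norm_num
  have h18 : ((1:ℝ)/8)^m = (2:ℝ) ^ ((-3:ℝ) * m) := by
    rw [h8, ← Real.rpow_natCast ((2:ℝ) ^ ((-3:ℝ))) m, ← Real.rpow_mul (by norm_num)]
  have h2N : (2:ℝ) ^ N = (2:ℝ) ^ ((N:ℕ):ℝ) := (Real.rpow_natCast 2 N).symm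
  have hmR : (m:ℝ) = ((N:ℝ) + 1)/2 := by
    have := congrArg (fun n : ℕ => (n:ℝ)) hm
    push_cast at this; linarith
  calc (N.choose m : ℝ) * (1/8)^m ≤ 2 ^ N * (1/8)^m :=
        mul_le_mul_of_nonneg_right h1 (by positivity)
    _ = (2:ℝ) ^ ((N:ℝ)) * (2:ℝ) ^ ((-3:ℝ) * m) := by rw [h18, h2N]
    _ = (2:ℝ) ^ ((N:ℝ) + (-3:ℝ) * m) := (Real.rpow_add (by norm_num) _ _).symm
    _ ≤ (2:ℝ) ^ (-(N:ℝ)/2) := by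
        apply Real.rpow_le_rpow_of_exponent_le (by norm_num)
        rw [hmR]; linarith

/-- the median trick for complex random variables. -/
theorem stmt_14 {Ω : Type*} [MeasurableSpace Ω] (μ : MeasureTheory.Measure Ω)
    [MeasureTheory.IsProbabilityMeasure μ] (N : ℕ) (hN : Odd N)
    (X : Fin N → Ω → ℂ) (hXm : ∀ i, Measurable (X i))
    (hind : ProbabilityTheory.iIndepFun X μ)
    (c : ℂ) (R : ℝ) (hR : 0 ≤ R)
    (hb : ∀ i, μ {ω | R < ‖X i ω - c‖} ≤ 1 / 8) :
    μ {ω | Real.sqrt 2 * R < ‖medianC (fun i => X i ω) - c‖} ≤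
      ENNReal.ofReal ((2 : ℝ) ^ (-(N : ℝ) / 2)) := by
  classical
  set m := (N + 1) / 2 with hmdef
  have h2m : 2 * m = N + 1 := by
    obtain ⟨J, hJ⟩ := hN; omega
  set B : Set ℂ := {z : ℂ | R < ‖z - c‖} with hBdef
  have hBmeas : MeasurableSet B :=
    measurableSet_lt measurable_const ((measurable_id.sub_const c).norm)
  set A : Fin N → Set Ω := fun i => {ω | R < ‖X i ω - c‖} with hAdef
  have hAeq : ∀ i, A i = X i ⁻¹' B := fun i => rfl
  have hsub : {ω | Real.sqrt 2 * R < ‖medianC (fun i => X i ω) - c‖} ⊆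
      ⋃ T ∈ Finset.powersetCard m (Finset.univ : Finset (Fin N)), ⋂ i ∈ T, A i := by
    intro ω hω
    have hcard : m ≤ (Finset.univ.filter fun i => ω ∈ A i).card := by
      set w : Fin N → ℂ := fun i => X i ω with hw
      have hω' : Real.sqrt 2 * R < ‖medianC w - c‖ := hω
      have hre : (medianC w).re = medianR (fun i => (w i).re) := by
        simp [medianC]
      have him : (medianC w).im = medianR (fun i => (w i).im) := by
        simp [medianC]
      have key : R < |medianR (fun i => (w i).re) - c.re| ∨
          R < |medianR (fun i => (w i).im) - c.im| := by
        by_contra hcon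
        push_neg at hcon
        obtain ⟨h1, h2⟩ := hcon
        have hle : ‖medianC w - c‖ ≤ Real.sqrt 2 * R := by
          rw [Complex.norm_def, Complex.normSq_apply]
          have hr : (medianC w - c).re = medianR (fun i => (w i).re) - c.re := by
            rw [Complex.sub_re, hre]
          have hi : (medianC w - c).im = medianR (fun i => (w i).im) - c.im := by
            rw [Complex.sub_im, him]
          have habs1 := abs_le.mp (le_of_not_gt (fun hh => absurd hh (not_lt.mpr h1)))
          have habs2 := abs_le.mp (le_of_not_gt (fun hh => absurd hh (not_lt.mpr h2)))
          calc Real.sqrt ((medianC w - c).re * (medianC w - c).re +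
                (medianC w - c).im * (medianC w - c).im)
              ≤ Real.sqrt (2 * R ^ 2) := by
                apply Real.sqrt_le_sqrt
                rw [hr, hi]
                nlinarith [habs1.1, habs1.2, habs2.1, habs2.2]
            _ = Real.sqrt 2 * R := by
                rw [Real.sqrt_mul (by norm_num), Real.sqrt_sq hR]
        linarith
      have hcount : m ≤ (Finset.univ.filter fun i => R < ‖w i - c‖).card := by
        rcases key with hk | hk
        · exact aux_median_re_count hN w c hk
        · exact aux_median_im_count hN w c hk
      exact hcount
    obtain ⟨T, hTsub, hTcard⟩ :=
      Finset.exists_subset_card_eq hcard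
    simp only [Set.mem_iUnion]
    refine ⟨T, Finset.mem_powersetCard_univ.mpr hTcard, ?_⟩
    simp only [Set.mem_iInter]
    intro i hi
    have := hTsub hi
    simp only [Finset.mem_filter] at this
    exact this.2
  calc μ {ω | Real.sqrt 2 * R < ‖medianC (fun i => X i ω) - c‖}
      ≤ μ (⋃ T ∈ Finset.powersetCard m (Finset.univ : Finset (Fin N)), ⋂ i ∈ T, A i) :=
        MeasureTheory.measure_mono hsub
    _ ≤ ∑ T ∈ Finset.powersetCard m (Finset.univ : Finset (Fin N)), μ (⋂ i ∈ T, A i) :=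
        MeasureTheory.measure_biUnion_finset_le _ _
    _ ≤ ∑ T ∈ Finset.powersetCard m (Finset.univ : Finset (Fin N)), (1/8 : ℝ≥0∞) ^ m := by
        apply Finset.sum_le_sum
        intro T hT
        have hmeas : μ (⋂ i ∈ T, A i) = ∏ i ∈ T, μ (A i) :=
          hind.meas_biInter (fun i _ => ⟨B, hBmeas, (hAeq i).symm⟩)
        rw [hmeas]
        calc ∏ i ∈ T, μ (A i) ≤ ∏ i ∈ T, (1/8 : ℝ≥0∞) :=
              Finset.prod_le_prod' (fun i _ => hb i)
          _ = (1/8 : ℝ≥0∞) ^ m := by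
              rw [Finset.prod_const, Finset.mem_powersetCard_univ.mp hT]
    _ = (N.choose m : ℝ≥0∞) * (1/8 : ℝ≥0∞) ^ m := by
        rw [Finset.sum_const, Finset.card_powersetCard, Finset.card_univ, Fintype.card_fin,
          nsmul_eq_mul]
    _ ≤ ENNReal.ofReal ((2 : ℝ) ^ (-(N : ℝ) / 2)) := by
        have heq : (N.choose m : ℝ≥0∞) * (1/8 : ℝ≥0∞) ^ m =
            ENNReal.ofReal ((N.choose m : ℝ) * (1/8)^m) := by
          rw [ENNReal.ofReal_mul (by positivity), ENNReal.ofReal_natCast,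
            ENNReal.ofReal_pow (by norm_num : (0:ℝ) ≤ 1/8)]
          congr 2
          rw [ENNReal.ofReal_div_of_pos] <;> norm_num
        rw [heq]
        exact ENNReal.ofReal_le_ofReal (aux_real_bound N m h2m)


end
end
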